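/- arXiv:2302.08924 — 5 statements merged into one kernel-verified Lean document; each statement's English description precedes it below -/
import Mathlib

section
/- Theorem (MUDAN, Theorem 1): for all integers n ≥ 1 and m ≥ 1 there exist a mechanism (π, p) for the single-demand m-unit diffusion auction with n buyers and a map w* assigning to every normalized global profile θ' with Σ_i π_i(θ') ≥ 1 a buyer w*(θ') satisfying π_{w*(θ')}(θ') = 1, such that (π, p) is incentive compatible (IC), individually rational (IR), non-deficit (ND) and non-wasteful (NW), and is 1/m-weakly efficient in the following sense: for every true profile in which all n buyers are reachable and all buyers report truthfully (truthful global profile θ), SW(θ) ≥ (1/m)·(the sum of the min{m, |B*|} largest true valuations of buyers in B*), where B* is the set of buyers i for which there is a directed path from s to i in G_θ in which no vertex other than i equals w*(θ). -/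
open scoped Classical

/-- A single-demand report: a reported valuation and a reported neighbour set. -/
abbrev Report (ι : Type) := ℝ × Finset ι

/-- Buyer `i` is reachable from the seller: some seller-neighbour `j` reaches `i`
through reported edges. -/
def Reachable {ι : Type} (rs : Finset ι) (θ : ι → Report ι) (i : ι) : Prop :=
  ∃ j ∈ rs, Relation.ReflTransGen (fun a b => b ∈ (θ a).2) j i

/-- Normalization of a global profile: unreachable buyers get the silent report `(0, ∅)`. -/
noncomputable def normalizeS {ι : Type} (rs : Finset ι) (θ : ι → Report ι) :
    ι → Report ι :=
  fun i => if Reachable rs θ i then θ i else (0, (∅ : Finset ι))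

/-- All reported valuations are non-negative. -/
def ValidS {ι : Type} (θ : ι → Report ι) : Prop := ∀ i, 0 ≤ (θ i).1

/-- The profile is normalized. -/
def NormalizedS {ι : Type} (rs : Finset ι) (θ : ι → Report ι) : Prop :=
  normalizeS rs θ = θ

/-- Allocation rule of a single-demand mechanism (as a 0/1 quantity in `ℕ`). -/
abbrev MechA (ι : Type) := Finset ι → (ι → Report ι) → ι → ℕ

/-- Payment rule of a single-demand mechanism. -/
abbrev MechP (ι : Type) := Finset ι → (ι → Report ι) → ι → ℝ

/-- The mechanism allocates 0/1 items per buyer and gives unreachable buyers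
zero allocation and zero payment (on valid normalized profiles). -/
def ProperS {ι : Type} (A : MechA ι) (P : MechP ι) : Prop :=
  ∀ rs θ, ValidS θ → NormalizedS rs θ → ∀ i,
    A rs θ i ≤ 1 ∧ (¬ Reachable rs θ i → A rs θ i = 0 ∧ P rs θ i = 0)

/-- Utility of buyer `i` with true valuations `v`. -/
noncomputable def utilS {ι : Type} (v : ι → ℝ) (A : MechA ι) (P : MechP ι)
    (rs : Finset ι) (θ : ι → Report ι) (i : ι) : ℝ :=
  v i * (A rs θ i : ℝ) - P rs θ i

/-- Social welfare with true valuations `v`. -/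
noncomputable def SWS {ι : Type} [Fintype ι] (v : ι → ℝ) (A : MechA ι)
    (rs : Finset ι) (θ : ι → Report ι) : ℝ :=
  ∑ i, v i * (A rs θ i : ℝ)

/-- Revenue of the seller. -/
noncomputable def RVS {ι : Type} [Fintype ι] (P : MechP ι)
    (rs : Finset ι) (θ : ι → Report ι) : ℝ :=
  ∑ i, P rs θ i

/-- Number of reachable buyers. -/
noncomputable def nReach {ι : Type} [Fintype ι] (rs : Finset ι) (θ : ι → Report ι) : ℕ :=
  (Finset.univ.filter (fun i => Reachable rs θ i)).card

/-- Incentive compatibility: truthful reporting is a dominant strategy. -/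
def ICS {ι : Type} [DecidableEq ι] (A : MechA ι) (P : MechP ι) : Prop :=
  ∀ (rs : Finset ι) (v : ι → ℝ) (r : ι → Finset ι), (∀ i, 0 ≤ v i) →
    ∀ θ : ι → Report ι, (∀ j, 0 ≤ (θ j).1 ∧ (θ j).2 ⊆ r j) →
    ∀ (i : ι) (v'' : ℝ) (r'' : Finset ι), 0 ≤ v'' → r'' ⊆ r i →
      utilS v A P rs (normalizeS rs (Function.update θ i (v i, r i))) i ≥
        utilS v A P rs (normalizeS rs (Function.update θ i (v'', r''))) i

/-- Individual rationality: a truthful buyer always gets non-negative utility. -/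
def IRS {ι : Type} [DecidableEq ι] (A : MechA ι) (P : MechP ι) : Prop :=
  ∀ (rs : Finset ι) (v : ι → ℝ) (r : ι → Finset ι), (∀ i, 0 ≤ v i) →
    ∀ θ : ι → Report ι, (∀ j, 0 ≤ (θ j).1 ∧ (θ j).2 ⊆ r j) →
    ∀ i : ι, 0 ≤ utilS v A P rs (normalizeS rs (Function.update θ i (v i, r i))) i

/-- Non-deficit: the revenue is non-negative on every valid normalized profile. -/
def NDS {ι : Type} [Fintype ι] (P : MechP ι) : Prop :=
  ∀ rs θ, ValidS θ → NormalizedS rs θ → 0 ≤ RVS P rs θ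

/-- Non-wastefulness for an `m`-unit auction. -/
def NWS {ι : Type} [Fintype ι] (m : ℕ) (A : MechA ι) : Prop :=
  ∀ rs θ, ValidS θ → NormalizedS rs θ → ∑ i, A rs θ i = min m (nReach rs θ)

/-- Sum of the `k` largest elements of a multiset of reals. -/
noncomputable def topSum (k : ℕ) (s : Multiset ℝ) : ℝ :=
  ((Multiset.sort s (· ≤ ·)).reverse.take k).sum

/-- The `r`-th largest element of a multiset of reals (1-based). -/
noncomputable def kthLargestM (s : Multiset ℝ) (r : ℕ) : ℝ :=
  (Multiset.sort s (· ≤ ·)).reverse.getD (r - 1) 0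

set_option linter.unusedSectionVars false
set_option linter.unusedVariables false

set_option linter.unusedSectionVars false
set_option linter.unusedVariables false
section Mudan

variable {ι : Type} [Fintype ι] [DecidableEq ι] [LinearOrder ι]

/-- strict lexicographic "bid" order -/
def betaLT (θ : ι → Report ι) (x y : ι) : Prop :=
  toLex ((θ x).1, x) < toLex ((θ y).1, y)

lemma betaLT_iff (θ : ι → Report ι) (x y : ι) :
    betaLT θ x y ↔ ((θ x).1 < (θ y).1 ∨ ((θ x).1 = (θ y).1 ∧ x < y)) := by
  unfold betaLT; exact Prod.Lex.lt_iff

lemma betaLT_irrefl (θ : ι → Report ι) (x : ι) : ¬ betaLT θ x x := by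
  unfold betaLT; exact lt_irrefl _

lemma betaLT_trans {θ : ι → Report ι} {x y z : ι} :
    betaLT θ x y → betaLT θ y z → betaLT θ x z := by
  unfold betaLT; exact lt_trans

lemma betaLT_asymm {θ : ι → Report ι} {x y : ι} :
    betaLT θ x y → ¬ betaLT θ y x := by
  unfold betaLT; exact fun h h' => absurd (lt_trans h h') (lt_irrefl _)

lemma betaLT_trichotomy (θ : ι → Report ι) (x y : ι) :
    betaLT θ x y ∨ x = y ∨ betaLT θ y x := by
  rcases lt_trichotomy (toLex ((θ x).1, x)) (toLex ((θ y).1, y)) with h | h | h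
  · exact Or.inl h
  · refine Or.inr (Or.inl ?_)
    have := congrArg (fun p : Lex (ℝ × ι) => (ofLex p).2) h
    simpa using this
  · exact Or.inr (Or.inr h)

lemma betaLT_wf (θ : ι → Report ι) : WellFounded (betaLT θ) := by
  haveI : IsTrans ι (betaLT θ) := ⟨fun _ _ _ => betaLT_trans⟩
  haveI : IsIrrefl ι (betaLT θ) := ⟨betaLT_irrefl θ⟩
  exact Finite.wellFounded_of_trans_of_irrefl _

/-- fuel-indexed reachability -/
def reachN (rs : Finset ι) (θ : ι → Report ι) : ℕ → ι → Prop
  | 0, x => x ∈ rs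
  | (n+1), x => reachN rs θ n x ∨ ∃ y, reachN rs θ n y ∧ x ∈ (θ y).2

lemma reachN_mono {rs : Finset ι} {θ : ι → Report ι} {n n' : ℕ} (h : n ≤ n') {x : ι} :
    reachN rs θ n x → reachN rs θ n' x := by
  induction n' with
  | zero => intro hx; exact (Nat.le_zero.mp h) ▸ hx
  | succ k ih =>
    intro hx
    rcases Nat.lt_or_ge n (k+1) with hlt | hge
    · exact Or.inl (ih (Nat.lt_succ_iff.mp hlt) hx)
    · exact (Nat.le_antisymm h hge) ▸ hx

lemma reachable_iff_reachN {rs : Finset ι} {θ : ι → Report ι} {x : ι} :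
    Reachable rs θ x ↔ ∃ n, reachN rs θ n x := by
  constructor
  · rintro ⟨j, hj, hpath⟩
    induction hpath with
    | refl => exact ⟨0, hj⟩
    | tail _ hstep ih =>
      obtain ⟨n, hn⟩ := ih
      exact ⟨n+1, Or.inr ⟨_, hn, hstep⟩⟩
  · rintro ⟨n, hn⟩
    induction n generalizing x with
    | zero => exact ⟨x, hn, Relation.ReflTransGen.refl⟩
    | succ k ih =>
      rcases hn with hn | ⟨y, hy, hstep⟩
      · exact ih hn
      · obtain ⟨j, hj, hp⟩ := ih hy
        exact ⟨j, hj, hp.tail hstep⟩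

/-- reachability is monotone in the edge sets -/
lemma reachable_mono {rs : Finset ι} {θ θ' : ι → Report ι}
    (h : ∀ a, (θ a).2 ⊆ (θ' a).2) {x : ι} (hx : Reachable rs θ x) :
    Reachable rs θ' x := by
  obtain ⟨j, hj, hp⟩ := hx
  refine ⟨j, hj, ?_⟩
  induction hp with
  | refl => exact Relation.ReflTransGen.refl
  | tail _ hstep ih => exact ih.tail (h _ hstep)

lemma reachable_congr_edges {rs : Finset ι} {θ θ' : ι → Report ι}
    (h : ∀ a, (θ a).2 = (θ' a).2) {x : ι} :
    Reachable rs θ x ↔ Reachable rs θ' x :=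
  ⟨reachable_mono (fun a => (h a) ▸ Finset.Subset.refl _),
   reachable_mono (fun a => (h a) ▸ Finset.Subset.refl _)⟩

/-- profile with `i`'s edges deleted -/
noncomputable def delE (θ : ι → Report ι) (i : ι) : ι → Report ι :=
  Function.update θ i ((θ i).1, (∅ : Finset ι))

lemma delE_edges (θ : ι → Report ι) (i a : ι) :
    ((delE θ i) a).2 = if a = i then (∅ : Finset ι) else (θ a).2 := by
  unfold delE
  by_cases h : a = i
  · subst h; simp
  · simp [Function.update_of_ne h, h]

lemma delE_edges_subset (θ : ι → Report ι) (i a : ι) :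
    ((delE θ i) a).2 ⊆ (θ a).2 := by
  rw [delE_edges]
  by_cases h : a = i <;> simp [h]

/-- Q-lemma: either x is reachable avoiding i's edges, or i is reached strictly earlier. -/
lemma reach_avoid_or_earlier {rs : Finset ι} {θ : ι → Report ι} :
    ∀ (n : ℕ) (x i : ι), reachN rs θ n x →
      Reachable rs (delE θ i) x ∨ ∃ k < n, reachN rs θ k i := by
  intro n
  induction n with
  | zero =>
    intro x i hx
    exact Or.inl ⟨x, hx, Relation.ReflTransGen.refl⟩
  | succ k ih =>
    intro x i hx
    rcases hx with hx | ⟨y, hy, hstep⟩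
    · rcases ih x i hx with h | ⟨k', hk', hki⟩
      · exact Or.inl h
      · exact Or.inr ⟨k', Nat.lt_succ_of_lt hk', hki⟩
    · by_cases hyi : y = i
      · exact Or.inr ⟨k, Nat.lt_succ_self k, hyi ▸ hy⟩
      · rcases ih y i hy with h | ⟨k', hk', hki⟩
        · obtain ⟨j, hj, hp⟩ := h
          refine Or.inl ⟨j, hj, hp.tail ?_⟩
          rw [delE_edges]; simpa [hyi] using hstep
        · exact Or.inr ⟨k', Nat.lt_succ_of_lt hk', hki⟩

/-- F1: mutual domination is impossible. -/
lemma vis_total {rs : Finset ι} {θ : ι → Report ι} {x y : ι} (hxy : x ≠ y)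
    (hx : Reachable rs θ x) (_hy : Reachable rs θ y)
    (h : ¬ Reachable rs (delE θ y) x) : Reachable rs (delE θ x) y := by
  classical
  obtain ⟨n, hn⟩ := reachable_iff_reachN.mp hx
  -- minimal fuel for x
  have hex : ∃ n, reachN rs θ n x := ⟨n, hn⟩
  set N := Nat.find hex with hN
  have hNx : reachN rs θ N x := Nat.find_spec hex
  rcases reach_avoid_or_earlier N x y hNx with hc | ⟨k, hk, hky⟩
  · exact absurd hc h
  · rcases reach_avoid_or_earlier k y x hky with hc | ⟨k', hk', hkx⟩
    · exact hc
    · exact absurd hkx (Nat.find_min hex (lt_trans hk' hk))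

/-- truncation: reachable ⇒ reachable avoiding own out-edges. -/
lemma reach_avoid_self {rs : Finset ι} {θ : ι → Report ι} {x : ι}
    (hx : Reachable rs θ x) : Reachable rs (delE θ x) x := by
  classical
  obtain ⟨n, hn⟩ := reachable_iff_reachN.mp hx
  have hex : ∃ n, reachN rs θ n x := ⟨n, hn⟩
  have hNx : reachN rs θ (Nat.find hex) x := Nat.find_spec hex
  rcases Nat.eq_zero_or_pos (Nat.find hex) with h0 | hpos
  · rw [h0] at hNx
    exact ⟨x, hNx, Relation.ReflTransGen.refl⟩
  · obtain ⟨k, hk⟩ := Nat.exists_eq_succ_of_ne_zero (Nat.pos_iff_ne_zero.mp hpos)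
    rw [hk] at hNx
    rcases hNx with hNx | ⟨y, hy, hstep⟩
    · exact absurd hNx (Nat.find_min hex (hk ▸ Nat.lt_succ_self k))
    · by_cases hyx : y = x
      · exact absurd (hyx ▸ hy) (Nat.find_min hex (hk ▸ Nat.lt_succ_self k))
      · rcases reach_avoid_or_earlier k y x hy with hc | ⟨k', hk', hkx⟩
        · obtain ⟨j, hj, hp⟩ := hc
          refine ⟨j, hj, hp.tail ?_⟩
          rw [delE_edges]; simpa [hyx] using hstep
        · exact absurd hkx (Nat.find_min hex (hk ▸ Nat.lt_succ_of_lt hk'))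

/-- F2: if j is unreachable without i's edges, then reachable-without-i ⊆ reachable-without-j. -/
lemma vis_nested {rs : Finset ι} {θ : ι → Report ι} {i j : ι}
    (hj : ¬ Reachable rs (delE θ i) j) {x : ι}
    (hx : Reachable rs (delE θ i) x) : Reachable rs (delE θ j) x := by
  obtain ⟨j0, hj0, hp⟩ := hx
  refine ⟨j0, hj0, ?_⟩
  induction hp with
  | refl => exact Relation.ReflTransGen.refl
  | @tail b c hb hstep ih =>
    have hbj : b ≠ j := by
      rintro rfl
      exact hj ⟨j0, hj0, hb⟩
    refine ih.tail ?_
    rw [delE_edges]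
    simp only [hbj, if_false]
    exact delE_edges_subset θ i b hstep
/-- reachable set -/
noncomputable def Rset (rs : Finset ι) (θ : ι → Report ι) : Finset ι :=
  Finset.univ.filter (fun x => Reachable rs θ x)

lemma mem_Rset {rs : Finset ι} {θ : ι → Report ι} {x : ι} :
    x ∈ Rset rs θ ↔ Reachable rs θ x := by simp [Rset]

/-- visible set of `i`: buyers reachable without `i`'s out-edges -/
noncomputable def Cvis (rs : Finset ι) (θ : ι → Report ι) (i : ι) : Finset ι :=
  Finset.univ.filter (fun x => x ≠ i ∧ Reachable rs (delE θ i) x)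

lemma mem_Cvis {rs : Finset ι} {θ : ι → Report ι} {i x : ι} :
    x ∈ Cvis rs θ i ↔ x ≠ i ∧ Reachable rs (delE θ i) x := by simp [Cvis]

lemma Cvis_subset_Rset (rs : Finset ι) (θ : ι → Report ι) (i : ι) :
    Cvis rs θ i ⊆ Rset rs θ := by
  intro x hx
  rw [mem_Cvis] at hx
  rw [mem_Rset]
  exact reachable_mono (delE_edges_subset θ i) hx.2

lemma not_self_mem_Cvis (rs : Finset ι) (θ : ι → Report ι) (i : ι) :
    i ∉ Cvis rs θ i := by simp [mem_Cvis]

/-- F1 packaged -/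
lemma mem_Cvis_of_not_mem {rs : Finset ι} {θ : ι → Report ι} {i y : ι} (hne : i ≠ y)
    (hi : i ∈ Rset rs θ) (hy : y ∈ Rset rs θ) (h : y ∉ Cvis rs θ i) :
    i ∈ Cvis rs θ y := by
  rw [mem_Rset] at hi hy
  rw [mem_Cvis] at h ⊢
  refine ⟨hne, ?_⟩
  push_neg at h
  have hny : ¬ Reachable rs (delE θ i) y := by
    intro hr; exact (h hne.symm) hr
  exact vis_total hne.symm hy hi hny

/-- F2 packaged -/
lemma Cvis_subset_of_not_mem {rs : Finset ι} {θ : ι → Report ι} {i y : ι}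
    (h : y ∉ Cvis rs θ i) (hyne : y ≠ i) {x : ι} (hx : x ∈ Cvis rs θ i) (hxy : x ≠ y) :
    x ∈ Cvis rs θ y := by
  rw [mem_Cvis] at hx ⊢
  refine ⟨hxy, ?_⟩
  have hny : ¬ Reachable rs (delE θ i) y := by
    rw [mem_Cvis] at h; push_neg at h; exact h hyne
  exact vis_nested hny hx.2

/-- number of visible beaters -/
noncomputable def btN (rs : Finset ι) (θ : ι → Report ι) (j : ι) : ℕ :=
  ((Cvis rs θ j).filter (fun x => betaLT θ j x)).card

/-- winner predicate: well-founded recursion along the bid order -/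
noncomputable def winF (rs : Finset ι) (θ : ι → Report ι) (m : ℕ) : ι → Prop :=
  (betaLT_wf θ).fix (fun j IH =>
    j ∈ Rset rs θ ∧
      ((Rset rs θ).filter (fun y => ∃ h : betaLT θ y j, IH y h)).card + btN rs θ j < m)

lemma winF_iff (rs : Finset ι) (θ : ι → Report ι) (m : ℕ) (j : ι) :
    winF rs θ m j ↔ (j ∈ Rset rs θ ∧
      ((Rset rs θ).filter (fun y => betaLT θ y j ∧ winF rs θ m y)).card + btN rs θ j < m) := by
  have h := WellFounded.fix_eq (betaLT_wf θ) (fun j IH =>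
    j ∈ Rset rs θ ∧
      ((Rset rs θ).filter (fun y => ∃ h : betaLT θ y j, IH y h)).card + btN rs θ j < m) j
  have hset : (Finset.filter (fun y => ∃ (_ : betaLT θ y j), winF rs θ m y) (Rset rs θ))
      = (Finset.filter (fun y => betaLT θ y j ∧ winF rs θ m y) (Rset rs θ)) :=
    Finset.filter_congr (fun y _ => by
      constructor
      · rintro ⟨h1, h2⟩; exact ⟨h1, h2⟩
      · rintro ⟨h1, h2⟩; exact ⟨h1, h2⟩)
  unfold winF
  rw [h]
  show (j ∈ Rset rs θ ∧
      (Finset.filter (fun y => ∃ (_ : betaLT θ y j), winF rs θ m y) (Rset rs θ)).card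
        + btN rs θ j < m) ↔ _
  rw [hset]
  exact Iff.rfl

/-- winner set -/
noncomputable def Wset (rs : Finset ι) (θ : ι → Report ι) (m : ℕ) : Finset ι :=
  Finset.univ.filter (fun x => winF rs θ m x)

lemma mem_Wset {rs : Finset ι} {θ : ι → Report ι} {m : ℕ} {x : ι} :
    x ∈ Wset rs θ m ↔ winF rs θ m x := by simp [Wset]

lemma Wset_subset_Rset (rs : Finset ι) (θ : ι → Report ι) (m : ℕ) :
    Wset rs θ m ⊆ Rset rs θ := by
  intro x hx
  rw [mem_Wset, winF_iff] at hx
  exact hx.1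

/-- number of winners strictly below j in the bid order -/
noncomputable def kbelow (rs : Finset ι) (θ : ι → Report ι) (m : ℕ) (j : ι) : ℕ :=
  ((Wset rs θ m).filter (fun y => betaLT θ y j)).card

lemma winF_iff' (rs : Finset ι) (θ : ι → Report ι) (m : ℕ) (j : ι) :
    winF rs θ m j ↔ (j ∈ Rset rs θ ∧ kbelow rs θ m j + btN rs θ j < m) := by
  rw [winF_iff]
  have : (Rset rs θ).filter (fun y => betaLT θ y j ∧ winF rs θ m y)
      = (Wset rs θ m).filter (fun y => betaLT θ y j) := by
    ext y
    simp only [Finset.mem_filter, mem_Wset, mem_Rset]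
    constructor
    · rintro ⟨h1, h2, h3⟩; exact ⟨h3, h2⟩
    · rintro ⟨h1, h2⟩
      have := (winF_iff rs θ m y).mp h1
      exact ⟨mem_Rset.mp this.1, h2, h1⟩
  rw [this]; rfl
/-- a nonempty finset has a beta-maximal element -/
lemma exists_beta_max (θ : ι → Report ι) {s : Finset ι} (hs : s.Nonempty) :
    ∃ w ∈ s, ∀ x ∈ s, x ≠ w → betaLT θ x w := by
  obtain ⟨w, hw, hmax⟩ := s.exists_max_image (fun x => toLex ((θ x).1, x)) hs
  refine ⟨w, hw, fun x hx hne => ?_⟩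
  have hle := hmax x hx
  have hne' : toLex ((θ x).1, x) ≠ toLex ((θ w).1, w) := by
    intro h
    exact hne (by simpa using congrArg (fun p : Lex (ℝ × ι) => (ofLex p).2) h)
  exact lt_of_le_of_ne hle hne'

lemma kbelow_max_winner {rs : Finset ι} {θ : ι → Report ι} {m : ℕ} {w : ι}
    (hw : w ∈ Wset rs θ m) (hmax : ∀ x ∈ Wset rs θ m, x ≠ w → betaLT θ x w) :
    kbelow rs θ m w = (Wset rs θ m).card - 1 := by
  unfold kbelow
  have : (Wset rs θ m).filter (fun y => betaLT θ y w) = (Wset rs θ m).erase w := by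
    ext y
    simp only [Finset.mem_filter, Finset.mem_erase]
    constructor
    · rintro ⟨h1, h2⟩
      exact ⟨fun h => betaLT_irrefl θ w (h ▸ h2), h1⟩
    · rintro ⟨h1, h2⟩
      exact ⟨h2, hmax y h2 h1⟩
  rw [this, Finset.card_erase_of_mem hw]

lemma Wset_card_le {rs : Finset ι} {θ : ι → Report ι} {m : ℕ} :
    (Wset rs θ m).card ≤ m := by
  rcases (Wset rs θ m).eq_empty_or_nonempty with h | h
  · simp [h]
  · obtain ⟨w, hw, hmax⟩ := exists_beta_max θ h
    have hwin := mem_Wset.mp hw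
    rw [winF_iff'] at hwin
    have hk := kbelow_max_winner hw hmax
    have hpos : 1 ≤ (Wset rs θ m).card := Finset.card_pos.mpr ⟨w, hw⟩
    omega

lemma Wset_card_ge {rs : Finset ι} {θ : ι → Report ι} {m : ℕ}
    (h : (Rset rs θ \ Wset rs θ m).Nonempty) : m ≤ (Wset rs θ m).card := by
  obtain ⟨z, hz, hmax⟩ := exists_beta_max θ h
  have hzR : z ∈ Rset rs θ := (Finset.mem_sdiff.mp hz).1
  have hzW : z ∉ Wset rs θ m := (Finset.mem_sdiff.mp hz).2
  have hnw : ¬ winF rs θ m z := fun hw => hzW (mem_Wset.mpr hw)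
  rw [winF_iff'] at hnw
  push_neg at hnw
  have hge := hnw hzR
  have hbt : btN rs θ z ≤ ((Wset rs θ m).filter (fun y => betaLT θ z y)).card := by
    apply Finset.card_le_card
    intro x hx
    rw [Finset.mem_filter] at hx ⊢
    obtain ⟨hxC, hxb⟩ := hx
    have hxR : x ∈ Rset rs θ := Cvis_subset_Rset rs θ z hxC
    refine ⟨?_, hxb⟩
    by_contra hxW
    have hxz : x ≠ z := fun h => betaLT_irrefl θ z (h ▸ hxb)
    have := hmax x (Finset.mem_sdiff.mpr ⟨hxR, hxW⟩) hxz
    exact betaLT_asymm hxb this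
  have hdisj : Disjoint ((Wset rs θ m).filter (fun y => betaLT θ y z))
      ((Wset rs θ m).filter (fun y => betaLT θ z y)) := by
    rw [Finset.disjoint_filter]
    exact fun x _ h1 h2 => betaLT_asymm h1 h2
  calc m ≤ kbelow rs θ m z + btN rs θ z := hge
    _ ≤ ((Wset rs θ m).filter (fun y => betaLT θ y z)).card
        + ((Wset rs θ m).filter (fun y => betaLT θ z y)).card := by
        unfold kbelow; omega
    _ = (((Wset rs θ m).filter (fun y => betaLT θ y z))
        ∪ ((Wset rs θ m).filter (fun y => betaLT θ z y))).card :=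
        (Finset.card_union_of_disjoint hdisj).symm
    _ ≤ (Wset rs θ m).card := Finset.card_le_card (by
        intro x hx
        rcases Finset.mem_union.mp hx with h' | h'
        · exact (Finset.mem_filter.mp h').1
        · exact (Finset.mem_filter.mp h').1)

lemma Wset_card (rs : Finset ι) (θ : ι → Report ι) (m : ℕ) :
    (Wset rs θ m).card = min m (Rset rs θ).card := by
  rcases (Rset rs θ \ Wset rs θ m).eq_empty_or_nonempty with h | h
  · have hsub : Rset rs θ ⊆ Wset rs θ m := by
      intro x hx
      by_contra hxW
      exact Finset.notMem_empty x (h ▸ Finset.mem_sdiff.mpr ⟨hx, hxW⟩)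
    have heq : Wset rs θ m = Rset rs θ :=
      Finset.Subset.antisymm (Wset_subset_Rset rs θ m) hsub
    rw [heq]
    exact (min_eq_right (heq ▸ Wset_card_le)).symm
  · have hge := Wset_card_ge h
    have hle : (Wset rs θ m).card ≤ (Rset rs θ).card :=
      Finset.card_le_card (Wset_subset_Rset rs θ m)
    have := @Wset_card_le _ _ _ _ rs θ m
    omega

/-- cleanliness of the beta-max winner -/
lemma clean_max_winner {rs : Finset ι} {θ : ι → Report ι} {m : ℕ} {w : ι}
    (hw : w ∈ Wset rs θ m) (hmax : ∀ x ∈ Wset rs θ m, x ≠ w → betaLT θ x w)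
    {x : ι} (hx : x ∈ Cvis rs θ w) (hbx : betaLT θ w x) : x ∈ Wset rs θ m := by
  by_contra hxW
  have hxR : x ∈ Rset rs θ := Cvis_subset_Rset rs θ w hx
  have hcard : (Wset rs θ m).card = m := by
    have hge := Wset_card_ge ⟨x, Finset.mem_sdiff.mpr ⟨hxR, hxW⟩⟩
    exact le_antisymm Wset_card_le hge
  have hwin := mem_Wset.mp hw
  rw [winF_iff'] at hwin
  have hk := kbelow_max_winner hw hmax
  have hbt : 1 ≤ btN rs θ w := by
    have : ((Cvis rs θ w).filter (fun y => betaLT θ w y)).Nonempty :=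
      ⟨x, Finset.mem_filter.mpr ⟨hx, hbx⟩⟩
    have := Finset.card_pos.mpr this
    unfold btN
    omega
  have hm : 1 ≤ m := by
    have : 1 ≤ (Wset rs θ m).card := Finset.card_pos.mpr ⟨w, hw⟩
    omega
  omega

/-- key lemma: if some winner below `i` is invisible to `i`, then `i` wins. -/
lemma ystar {rs : Finset ι} {θ : ι → Report ι} {m : ℕ} {i : ι}
    (hi : i ∈ Rset rs θ)
    (hex : ∃ y ∈ Wset rs θ m, betaLT θ y i ∧ y ∉ Cvis rs θ i) :
    winF rs θ m i := by
  classical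
  set S := (Wset rs θ m).filter (fun y => betaLT θ y i ∧ y ∉ Cvis rs θ i) with hS
  have hSne : S.Nonempty := by
    obtain ⟨y, hy1, hy2, hy3⟩ := hex
    exact ⟨y, Finset.mem_filter.mpr ⟨hy1, hy2, hy3⟩⟩
  obtain ⟨ys, hysS, hysmax⟩ := exists_beta_max θ hSne
  obtain ⟨hysW, hysb, hysC⟩ : ys ∈ Wset rs θ m ∧ betaLT θ ys i ∧ ys ∉ Cvis rs θ i := by
    have := Finset.mem_filter.mp hysS
    exact ⟨this.1, this.2.1, this.2.2⟩
  have hysne : ys ≠ i := fun h => betaLT_irrefl θ i (h ▸ hysb)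
  have hysR : ys ∈ Rset rs θ := Wset_subset_Rset rs θ m hysW
  have hwinys := mem_Wset.mp hysW
  rw [winF_iff'] at hwinys
  set Ci := Cvis rs θ i with hCi
  -- Claim A : 1 + |Ci ∩ (ys, ∞)| ≤ bt ys
  have hA : 1 + (Ci.filter (fun x => betaLT θ ys x)).card ≤ btN rs θ ys := by
    have hsub : insert i (Ci.filter (fun x => betaLT θ ys x))
        ⊆ (Cvis rs θ ys).filter (fun x => betaLT θ ys x) := by
      intro x hx
      rcases Finset.mem_insert.mp hx with rfl | hx'
      · exact Finset.mem_filter.mpr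
          ⟨mem_Cvis_of_not_mem (Ne.symm hysne) hi hysR hysC, hysb⟩
      · obtain ⟨hxC, hxb⟩ := Finset.mem_filter.mp hx'
        have hxys : x ≠ ys := fun h => betaLT_irrefl θ ys (h ▸ hxb)
        exact Finset.mem_filter.mpr
          ⟨Cvis_subset_of_not_mem hysC hysne hxC hxys, hxb⟩
    have hcard := Finset.card_le_card hsub
    have hni : i ∉ Ci.filter (fun x => betaLT θ ys x) := by
      intro h
      exact not_self_mem_Cvis rs θ i (Finset.mem_filter.mp h).1
    rw [Finset.card_insert_of_notMem hni] at hcard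
    unfold btN
    omega
  -- Claim B : kbelow i ≤ kbelow ys + 1 + |Ci ∩ (ys, i)|
  have hB : kbelow rs θ m i ≤ kbelow rs θ m ys + 1
      + (Ci.filter (fun x => betaLT θ ys x ∧ betaLT θ x i)).card := by
    have hsub : (Wset rs θ m).filter (fun y => betaLT θ y i)
        ⊆ ((Wset rs θ m).filter (fun y => betaLT θ y ys))
          ∪ insert ys (Ci.filter (fun x => betaLT θ ys x ∧ betaLT θ x i)) := by
      intro y hy
      obtain ⟨hyW, hyb⟩ := Finset.mem_filter.mp hy
      rcases betaLT_trichotomy θ y ys with h1 | h1 | h1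
      · exact Finset.mem_union_left _ (Finset.mem_filter.mpr ⟨hyW, h1⟩)
      · exact Finset.mem_union_right _ (Finset.mem_insert.mpr (Or.inl h1))
      · refine Finset.mem_union_right _ (Finset.mem_insert.mpr (Or.inr ?_))
        have hyC : y ∈ Ci := by
          by_contra hyC
          have hymem : y ∈ S := Finset.mem_filter.mpr ⟨hyW, hyb, hyC⟩
          have hyne : y ≠ ys := fun h => betaLT_irrefl θ ys (h ▸ h1)
          exact betaLT_asymm h1 (hysmax y hymem hyne)
        exact Finset.mem_filter.mpr ⟨hyC, h1, hyb⟩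
    calc kbelow rs θ m i
        ≤ (((Wset rs θ m).filter (fun y => betaLT θ y ys))
          ∪ insert ys (Ci.filter (fun x => betaLT θ ys x ∧ betaLT θ x i))).card :=
          Finset.card_le_card hsub
      _ ≤ ((Wset rs θ m).filter (fun y => betaLT θ y ys)).card
          + (insert ys (Ci.filter (fun x => betaLT θ ys x ∧ betaLT θ x i))).card :=
          Finset.card_union_le _ _
      _ ≤ kbelow rs θ m ys + (1
          + (Ci.filter (fun x => betaLT θ ys x ∧ betaLT θ x i)).card) := by
          have := Finset.card_insert_le ys (Ci.filter (fun x => betaLT θ ys x ∧ betaLT θ x i))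
          unfold kbelow
          omega
      _ = kbelow rs θ m ys + 1
          + (Ci.filter (fun x => betaLT θ ys x ∧ betaLT θ x i)).card := by ring
  -- Claim C : |Ci ∩ (ys, i)| + bt i ≤ |Ci ∩ (ys, ∞)|
  have hC : (Ci.filter (fun x => betaLT θ ys x ∧ betaLT θ x i)).card + btN rs θ i
      ≤ (Ci.filter (fun x => betaLT θ ys x)).card := by
    have hdisj : Disjoint (Ci.filter (fun x => betaLT θ ys x ∧ betaLT θ x i))
        (Ci.filter (fun x => betaLT θ i x)) := by
      rw [Finset.disjoint_filter]
      exact fun x _ h1 h2 => betaLT_asymm h1.2 h2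
    have hsub : (Ci.filter (fun x => betaLT θ ys x ∧ betaLT θ x i))
        ∪ (Ci.filter (fun x => betaLT θ i x)) ⊆ Ci.filter (fun x => betaLT θ ys x) := by
      intro x hx
      rcases Finset.mem_union.mp hx with h' | h'
      · obtain ⟨h1, h2, _⟩ := Finset.mem_filter.mp h'
        exact Finset.mem_filter.mpr ⟨h1, h2⟩
      · obtain ⟨h1, h2⟩ := Finset.mem_filter.mp h'
        exact Finset.mem_filter.mpr ⟨h1, betaLT_trans hysb h2⟩
    have := Finset.card_le_card hsub
    rw [Finset.card_union_of_disjoint hdisj] at this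
    unfold btN
    exact this
  rw [winF_iff']
  refine ⟨hi, ?_⟩
  omega
lemma betaLT_congr_val {ψ φ : ι → Report ι} (h : ∀ a, (ψ a).1 = (φ a).1) (x y : ι) :
    betaLT ψ x y ↔ betaLT φ x y := by
  unfold betaLT; rw [h x, h y]

lemma Rset_congr_edges {rs : Finset ι} {η η' : ι → Report ι}
    (h : ∀ a, (η a).2 = (η' a).2) : Rset rs η = Rset rs η' := by
  ext x; rw [mem_Rset, mem_Rset]; exact reachable_congr_edges h

lemma Rset_mono_edges {rs : Finset ι} {η η' : ι → Report ι}
    (h : ∀ a, (η a).2 ⊆ (η' a).2) : Rset rs η ⊆ Rset rs η' := by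
  intro x hx; rw [mem_Rset] at hx ⊢; exact reachable_mono h hx

lemma delE_edges_mono {η η' : ι → Report ι} (h : ∀ a, (η a).2 ⊆ (η' a).2) (y a : ι) :
    ((delE η y) a).2 ⊆ ((delE η' y) a).2 := by
  rw [delE_edges, delE_edges]
  by_cases hay : a = y <;> simp [hay, h a]

lemma Cvis_congr_edges {rs : Finset ι} {η η' : ι → Report ι}
    (h : ∀ a, (η a).2 = (η' a).2) (y : ι) : Cvis rs η y = Cvis rs η' y := by
  ext x
  rw [mem_Cvis, mem_Cvis]
  have : ∀ a, ((delE η y) a).2 = ((delE η' y) a).2 := by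
    intro a; rw [delE_edges, delE_edges]
    by_cases hay : a = y <;> simp [hay, h a]
  rw [reachable_congr_edges this]

lemma Cvis_mono_edges {rs : Finset ι} {η η' : ι → Report ι}
    (h : ∀ a, (η a).2 ⊆ (η' a).2) (y : ι) : Cvis rs η y ⊆ Cvis rs η' y := by
  intro x hx
  rw [mem_Cvis] at hx ⊢
  exact ⟨hx.1, reachable_mono (delE_edges_mono h y) hx.2⟩

/-- counting coupling: winners of the larger profile visible to `i` are covered by
winners of the smaller profile. -/
lemma couple_H {rs : Finset ι} {ψ φ : ι → Report ι} {m : ℕ} {i : ι}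
    (hval : ∀ a, (ψ a).1 = (φ a).1)
    (hedge : ∀ a, (ψ a).2 ⊆ (φ a).2)
    (hCi : Cvis rs φ i = Cvis rs ψ i) :
    ∀ j, (((Wset rs φ m) ∩ (Cvis rs φ i)).filter (fun y => betaLT φ y j)).card
       ≤ ((Wset rs ψ m).filter (fun y => betaLT φ y j)).card := by
  intro j
  induction j using (betaLT_wf φ).induction with
  | _ j IH =>
  set Ci := Cvis rs φ i with hCidef
  set S := ((Wset rs φ m) ∩ Ci).filter (fun y => betaLT φ y j) with hSdef
  rcases S.eq_empty_or_nonempty with hS | hS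
  · simp [hS]
  obtain ⟨y0, hy0S, hy0max⟩ := exists_beta_max φ hS
  have hy0 : y0 ∈ Wset rs φ m ∧ y0 ∈ Ci ∧ betaLT φ y0 j := by
    have h1 := Finset.mem_filter.mp hy0S
    exact ⟨(Finset.mem_inter.mp h1.1).1, (Finset.mem_inter.mp h1.1).2, h1.2⟩
  obtain ⟨hy0W, hy0C, hy0j⟩ := hy0
  -- S = insert y0 (smaller S)
  have hSeq : S = insert y0 (((Wset rs φ m) ∩ Ci).filter (fun y => betaLT φ y y0)) := by
    ext y
    simp only [hSdef, Finset.mem_insert, Finset.mem_filter]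
    constructor
    · rintro ⟨h1, h2⟩
      by_cases hyy : y = y0
      · exact Or.inl hyy
      · exact Or.inr ⟨h1, hy0max y (Finset.mem_filter.mpr ⟨h1, h2⟩) hyy⟩
    · rintro (rfl | ⟨h1, h2⟩)
      · exact ⟨Finset.mem_inter.mpr ⟨hy0W, hy0C⟩, hy0j⟩
      · exact ⟨h1, betaLT_trans h2 hy0j⟩
  have hy0nm : y0 ∉ ((Wset rs φ m) ∩ Ci).filter (fun y => betaLT φ y y0) := by
    intro h
    exact betaLT_irrefl φ y0 (Finset.mem_filter.mp h).2
  have hScard : S.card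
      = (((Wset rs φ m) ∩ Ci).filter (fun y => betaLT φ y y0)).card + 1 := by
    rw [hSeq, Finset.card_insert_of_notMem hy0nm]
  have hIH := IH y0 hy0j
  -- winners of φ below y0
  set kphi := ((Wset rs φ m).filter (fun y => betaLT φ y y0)).card with hkphi
  set gy0 := ((Wset rs ψ m).filter (fun y => betaLT φ y y0)).card with hgy0
  have hmono_g : gy0 ≤ ((Wset rs ψ m).filter (fun y => betaLT φ y j)).card := by
    apply Finset.card_le_card
    intro x hx
    obtain ⟨h1, h2⟩ := Finset.mem_filter.mp hx
    exact Finset.mem_filter.mpr ⟨h1, betaLT_trans h2 hy0j⟩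
  have hf_le_k : (((Wset rs φ m) ∩ Ci).filter (fun y => betaLT φ y y0)).card ≤ kphi := by
    apply Finset.card_le_card
    intro x hx
    obtain ⟨h1, h2⟩ := Finset.mem_filter.mp hx
    exact Finset.mem_filter.mpr ⟨(Finset.mem_inter.mp h1).1, h2⟩
  rcases Nat.lt_or_ge kphi gy0 with hcase | hcase
  · -- slack case
    calc S.card = (((Wset rs φ m) ∩ Ci).filter (fun y => betaLT φ y y0)).card + 1 := hScard
      _ ≤ kphi + 1 := by omega
      _ ≤ gy0 := hcase
      _ ≤ _ := hmono_g
  · -- y0 also wins in ψ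
    have hy0Rψ : y0 ∈ Rset rs ψ := by
      have : y0 ∈ Cvis rs ψ i := hCi ▸ hy0C
      exact Cvis_subset_Rset rs ψ i this
    have hwiny0 : winF rs ψ m y0 := by
      rw [winF_iff']
      refine ⟨hy0Rψ, ?_⟩
      have hkb : kbelow rs ψ m y0 = gy0 := by
        unfold kbelow
        rw [hgy0]
        congr 1
        exact Finset.filter_congr (fun x _ => by
          rw [betaLT_congr_val hval])
      have hbt : btN rs ψ y0 ≤ btN rs φ y0 := by
        unfold btN
        apply Finset.card_le_card
        intro x hx
        obtain ⟨h1, h2⟩ := Finset.mem_filter.mp hx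
        refine Finset.mem_filter.mpr ⟨Cvis_mono_edges hedge y0 h1, ?_⟩
        exact (betaLT_congr_val hval _ _).mp h2
      have hwφ := mem_Wset.mp hy0W
      rw [winF_iff'] at hwφ
      have hkφeq : kbelow rs φ m y0 = kphi := rfl
      have hbtψφ : btN rs ψ y0 ≤ btN rs φ y0 := hbt
      omega
    have hsub2 : insert y0 ((Wset rs ψ m).filter (fun y => betaLT φ y y0))
        ⊆ (Wset rs ψ m).filter (fun y => betaLT φ y j) := by
      intro x hx
      rcases Finset.mem_insert.mp hx with rfl | hx'
      · exact Finset.mem_filter.mpr ⟨mem_Wset.mpr hwiny0, hy0j⟩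
      · obtain ⟨h1, h2⟩ := Finset.mem_filter.mp hx'
        exact Finset.mem_filter.mpr ⟨h1, betaLT_trans h2 hy0j⟩
    have hy0ng : y0 ∉ (Wset rs ψ m).filter (fun y => betaLT φ y y0) := by
      intro h
      exact betaLT_irrefl φ y0 (Finset.mem_filter.mp h).2
    have := Finset.card_le_card hsub2
    rw [Finset.card_insert_of_notMem hy0ng] at this
    omega

/-- edge monotonicity : reporting more edges can only turn a loss into a win -/
lemma edge_mono {rs : Finset ι} {θ : ι → Report ι} {m : ℕ} {i : ι} {b : ℝ}
    {r2 r1 : Finset ι} (hsub : r2 ⊆ r1)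
    (hwin : winF rs (Function.update θ i (b, r2)) m i) :
    winF rs (Function.update θ i (b, r1)) m i := by
  classical
  set ψ := Function.update θ i (b, r2) with hψ
  set φ := Function.update θ i (b, r1) with hφ
  have hval : ∀ a, (ψ a).1 = (φ a).1 := by
    intro a
    by_cases ha : a = i
    · subst ha; simp [hψ, hφ]
    · simp [hψ, hφ, Function.update_of_ne ha]
  have hedge : ∀ a, (ψ a).2 ⊆ (φ a).2 := by
    intro a
    by_cases ha : a = i
    · subst ha; simpa [hψ, hφ] using hsub
    · simp [hψ, hφ, Function.update_of_ne ha]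
  have hCi : Cvis rs φ i = Cvis rs ψ i := by
    ext x
    rw [mem_Cvis, mem_Cvis]
    have : ∀ a, ((delE φ i) a).2 = ((delE ψ i) a).2 := by
      intro a
      rw [delE_edges, delE_edges]
      by_cases ha : a = i
      · simp [ha]
      · simp [ha, hψ, hφ, Function.update_of_ne ha]
    rw [reachable_congr_edges this]
  have hiRψ : i ∈ Rset rs ψ := by
    have := (winF_iff' rs ψ m i).mp hwin
    exact this.1
  have hiR : i ∈ Rset rs φ := Rset_mono_edges hedge hiRψ
  by_cases hZ : ∃ y ∈ Wset rs φ m, betaLT φ y i ∧ y ∉ Cvis rs φ i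
  · exact ystar hiR hZ
  · push_neg at hZ
    have hwψ := (winF_iff' rs ψ m i).mp hwin
    rw [winF_iff']
    refine ⟨hiR, ?_⟩
    have hkeq : (Wset rs φ m).filter (fun y => betaLT φ y i)
        = ((Wset rs φ m) ∩ (Cvis rs φ i)).filter (fun y => betaLT φ y i) := by
      ext y
      simp only [Finset.mem_filter, Finset.mem_inter]
      constructor
      · rintro ⟨h1, h2⟩
        exact ⟨⟨h1, hZ y h1 h2⟩, h2⟩
      · rintro ⟨⟨h1, _⟩, h2⟩
        exact ⟨h1, h2⟩
    have hH := couple_H (m := m) hval hedge hCi i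
    have hkψ : ((Wset rs ψ m).filter (fun y => betaLT φ y i)).card = kbelow rs ψ m i := by
      unfold kbelow
      congr 1
      exact Finset.filter_congr (fun x _ => by rw [betaLT_congr_val hval])
    have hbteq : btN rs φ i = btN rs ψ i := by
      unfold btN
      rw [hCi]
      congr 1
      exact Finset.filter_congr (fun x _ => by rw [betaLT_congr_val hval])
    have hkφ : kbelow rs φ m i
        ≤ ((Wset rs ψ m).filter (fun y => betaLT φ y i)).card := by
      unfold kbelow
      rw [hkeq]
      exact hH
    omega
section BidMono

variable {rs : Finset ι} {θ : ι → Report ι} {m : ℕ} {i : ι} {e : Finset ι} {b b' : ℝ}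

/-- below the old bid, the two scans coincide -/
lemma bid_prefix (hbb : b < b') :
    ∀ y, betaLT (Function.update θ i (b, e)) y i →
      (winF rs (Function.update θ i (b, e)) m y ↔
       winF rs (Function.update θ i (b', e)) m y) := by
  classical
  set φ := Function.update θ i (b, e) with hφ
  set φ' := Function.update θ i (b', e) with hφ'
  have hedge : ∀ a, (φ a).2 = (φ' a).2 := by
    intro a
    by_cases ha : a = i
    · subst ha; simp [hφ, hφ']
    · simp [hφ, hφ', Function.update_of_ne ha]
  have hvne : ∀ x, x ≠ i → (φ x).1 = (φ' x).1 := by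
    intro x hx; simp [hφ, hφ', Function.update_of_ne hx]
  have hvi : (φ i).1 = b ∧ (φ' i).1 = b' := by constructor <;> simp [hφ, hφ']
  have hblt : ∀ y, y ≠ i → betaLT φ y i → betaLT φ' y i := by
    intro y hy h
    rw [betaLT_iff] at h ⊢
    rcases h with h | h
    · left; rw [← hvne y hy, hvi.2]; rw [hvi.1] at h; linarith
    · left; rw [← hvne y hy, hvi.2]; rw [hvi.1] at h; rw [h.1]; exact hbb
  have hbeq : ∀ x y, x ≠ i → y ≠ i → (betaLT φ x y ↔ betaLT φ' x y) := by
    intro x y hx hy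
    rw [betaLT_iff, betaLT_iff, hvne x hx, hvne y hy]
  have hR : Rset rs φ = Rset rs φ' := Rset_congr_edges hedge
  have hC : ∀ y, Cvis rs φ y = Cvis rs φ' y := Cvis_congr_edges hedge
  intro y
  induction y using (betaLT_wf φ).induction with
  | _ y IH =>
  intro hyi
  have hyne : y ≠ i := fun h => betaLT_irrefl φ i (h ▸ hyi)
  have hyi' : betaLT φ' y i := hblt y hyne hyi
  have hbt : btN rs φ y = btN rs φ' y := by
    unfold btN
    rw [hC y]
    congr 1
    apply Finset.filter_congr
    intro x _
    by_cases hx : x = i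
    · subst hx
      exact iff_of_true hyi hyi'
    · exact hbeq y x hyne hx
  have hkb : kbelow rs φ m y = kbelow rs φ' m y := by
    unfold kbelow
    congr 1
    ext z
    simp only [Finset.mem_filter, mem_Wset]
    by_cases hz : z = i
    · subst hz
      constructor
      · rintro ⟨_, h2⟩
        exact absurd hyi (betaLT_asymm h2)
      · rintro ⟨_, h2⟩
        exact absurd hyi' (betaLT_asymm h2)
    · constructor
      · rintro ⟨h1, h2⟩
        exact ⟨(IH z h2 (betaLT_trans h2 hyi)).mp h1,
          (hbeq z y hz hyne).mp h2⟩
      · rintro ⟨h1, h2⟩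
        have h2' : betaLT φ z y := (hbeq z y hz hyne).mpr h2
        exact ⟨(IH z h2' (betaLT_trans h2' hyi)).mpr h1, h2'⟩
  rw [winF_iff', winF_iff', hR, hbt, hkb]

/-- raising the bid preserves winning -/
lemma bid_mono (hbb : b < b')
    (hwin : winF rs (Function.update θ i (b, e)) m i) :
    winF rs (Function.update θ i (b', e)) m i := by
  classical
  set φ := Function.update θ i (b, e) with hφ
  set φ' := Function.update θ i (b', e) with hφ'
  have hedge : ∀ a, (φ a).2 = (φ' a).2 := by
    intro a
    by_cases ha : a = i
    · subst ha; simp [hφ, hφ']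
    · simp [hφ, hφ', Function.update_of_ne ha]
  have hvne : ∀ x, x ≠ i → (φ x).1 = (φ' x).1 := by
    intro x hx; simp [hφ, hφ', Function.update_of_ne hx]
  have hvi : (φ i).1 = b ∧ (φ' i).1 = b' := by constructor <;> simp [hφ, hφ']
  have hR : Rset rs φ = Rset rs φ' := Rset_congr_edges hedge
  have hC : ∀ y, Cvis rs φ y = Cvis rs φ' y := Cvis_congr_edges hedge
  have hbeq : ∀ x y, x ≠ i → y ≠ i → (betaLT φ x y ↔ betaLT φ' x y) := by
    intro x y hx hy
    rw [betaLT_iff, betaLT_iff, hvne x hx, hvne y hy]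
  have hlift : ∀ x, x ≠ i → betaLT φ' i x → betaLT φ i x := by
    intro x hx h
    rw [betaLT_iff] at h ⊢
    left
    rw [hvi.1, hvne x hx]
    rcases h with h | h
    · rw [hvi.2] at h; linarith
    · rw [← h.1, hvi.2]; exact hbb
  have hwi := (winF_iff' rs φ m i).mp hwin
  have hiR' : i ∈ Rset rs φ' := hR ▸ hwi.1
  by_cases hZ : ∃ y ∈ Wset rs φ' m, betaLT φ' y i ∧ y ∉ Cvis rs φ' i
  · exact ystar hiR' hZ
  · push_neg at hZ
    rw [winF_iff']
    refine ⟨hiR', ?_⟩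
    set CiB := (Cvis rs φ' i).filter (fun x => betaLT φ i x ∧ betaLT φ' x i) with hCiB
    -- (1) kbelow φ' i ≤ kbelow φ i + CiB.card
    have h1 : kbelow rs φ' m i ≤ kbelow rs φ m i + CiB.card := by
      have hsub : (Wset rs φ' m).filter (fun y => betaLT φ' y i)
          ⊆ ((Wset rs φ' m).filter (fun y => betaLT φ y i)) ∪ CiB := by
        intro y hy
        obtain ⟨hyW, hyb⟩ := Finset.mem_filter.mp hy
        have hyne : y ≠ i := fun h => betaLT_irrefl φ' i (h ▸ hyb)
        rcases betaLT_trichotomy φ y i with h' | h' | h'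
        · exact Finset.mem_union_left _ (Finset.mem_filter.mpr ⟨hyW, h'⟩)
        · exact absurd h' hyne
        · refine Finset.mem_union_right _ ?_
          rw [hCiB, Finset.mem_filter]
          exact ⟨hZ y hyW hyb, h', hyb⟩
      have hpre : (Wset rs φ' m).filter (fun y => betaLT φ y i)
          = (Wset rs φ m).filter (fun y => betaLT φ y i) := by
        ext z
        simp only [Finset.mem_filter, mem_Wset]
        constructor
        · rintro ⟨h1, h2⟩
          exact ⟨(bid_prefix hbb z h2).mpr h1, h2⟩
        · rintro ⟨h1, h2⟩
          exact ⟨(bid_prefix hbb z h2).mp h1, h2⟩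
      calc kbelow rs φ' m i
          ≤ (((Wset rs φ' m).filter (fun y => betaLT φ y i)) ∪ CiB).card :=
            Finset.card_le_card hsub
        _ ≤ ((Wset rs φ' m).filter (fun y => betaLT φ y i)).card + CiB.card :=
            Finset.card_union_le _ _
        _ = kbelow rs φ m i + CiB.card := by rw [hpre]; rfl
    -- (2) btN φ i = CiB.card + btN φ' i
    have h2 : btN rs φ i = CiB.card + btN rs φ' i := by
      unfold btN
      rw [hC i]
      have hpart : (Cvis rs φ' i).filter (fun x => betaLT φ i x)
          = CiB ∪ (Cvis rs φ' i).filter (fun x => betaLT φ' i x) := by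
        ext x
        simp only [hCiB, Finset.mem_union, Finset.mem_filter]
        constructor
        · rintro ⟨h1, h2'⟩
          have hxi : x ≠ i := fun h => betaLT_irrefl φ i (h ▸ h2')
          rcases betaLT_trichotomy φ' x i with h' | h' | h'
          · exact Or.inl ⟨h1, h2', h'⟩
          · exact absurd h' hxi
          · exact Or.inr ⟨h1, h'⟩
        · rintro (⟨h1, h2', _⟩ | ⟨h1, h2'⟩)
          · exact ⟨h1, h2'⟩
          · have hxi : x ≠ i := fun h => betaLT_irrefl φ' i (h ▸ h2')
            exact ⟨h1, hlift x hxi h2'⟩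
      have hdisj : Disjoint CiB ((Cvis rs φ' i).filter (fun x => betaLT φ' i x)) := by
        rw [hCiB, Finset.disjoint_filter]
        exact fun x _ hx1 hx2 => betaLT_asymm hx1.2 hx2
      rw [hpart, Finset.card_union_of_disjoint hdisj]
    omega

end BidMono
/-- generic congruence for the winner predicate -/
lemma winF_congr {rs : Finset ι} {η η' : ι → Report ι} {m : ℕ}
    (hR : Rset rs η = Rset rs η')
    (hC : ∀ y, Cvis rs η y = Cvis rs η' y)
    (hv : ∀ x ∈ Rset rs η, (η x).1 = (η' x).1) :
    ∀ j, winF rs η m j ↔ winF rs η' m j := by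
  intro j
  induction j using (betaLT_wf η).induction with
  | _ j IH =>
  by_cases hjR : j ∈ Rset rs η
  · have hbeq : ∀ x y, x ∈ Rset rs η → y ∈ Rset rs η →
        (betaLT η x y ↔ betaLT η' x y) := by
      intro x y hx hy
      rw [betaLT_iff, betaLT_iff, hv x hx, hv y hy]
    have hbt : btN rs η j = btN rs η' j := by
      unfold btN
      rw [hC j]
      apply Finset.card_bij (fun x _ => x) ?_ (fun _ _ _ _ h => h) (fun x hx => ⟨x, ?_, rfl⟩)
      · intro x hx
        obtain ⟨h1, h2⟩ := Finset.mem_filter.mp hx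
        refine Finset.mem_filter.mpr ⟨h1, ?_⟩
        have hxR : x ∈ Rset rs η := Cvis_subset_Rset rs η j (hC j ▸ h1)
        exact (hbeq j x hjR hxR).mp h2
      · obtain ⟨h1, h2⟩ := Finset.mem_filter.mp hx
        refine Finset.mem_filter.mpr ⟨h1, ?_⟩
        have hxR : x ∈ Rset rs η := Cvis_subset_Rset rs η j (hC j ▸ h1)
        exact (hbeq j x hjR hxR).mpr h2
    have hkb : kbelow rs η m j = kbelow rs η' m j := by
      unfold kbelow
      congr 1
      ext z
      simp only [Finset.mem_filter, mem_Wset]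
      constructor
      · rintro ⟨h1, h2⟩
        have hzR : z ∈ Rset rs η := Wset_subset_Rset rs η m (mem_Wset.mpr h1)
        exact ⟨(IH z h2).mp h1, (hbeq z j hzR hjR).mp h2⟩
      · rintro ⟨h1, h2⟩
        have hzR : z ∈ Rset rs η := hR ▸ Wset_subset_Rset rs η' m (mem_Wset.mpr h1)
        have h2' : betaLT η z j := (hbeq z j hzR hjR).mpr h2
        exact ⟨(IH z h2').mpr h1, h2'⟩
    rw [winF_iff', winF_iff', hR, hbt, hkb]
  · constructor
    · intro h; exact absurd ((winF_iff' rs η m j).mp h).1 hjR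
    · intro h
      have := ((winF_iff' rs η' m j).mp h).1
      rw [← hR] at this
      exact absurd this hjR

section NormLemmas

variable {rs : Finset ι} {φ : ι → Report ι}

noncomputable def normalizeS' (rs : Finset ι) (θ : ι → Report ι) : ι → Report ι :=
  fun i => if Reachable rs θ i then θ i else (0, (∅ : Finset ι))

lemma normalizeS'_eq (rs : Finset ι) (θ : ι → Report ι) :
    normalizeS' rs θ = normalizeS rs θ := rfl

lemma norm_edges_subset (a : ι) : ((normalizeS' rs φ) a).2 ⊆ (φ a).2 := by
  unfold normalizeS'
  by_cases h : Reachable rs φ a <;> simp [h]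

lemma reach_norm (x : ι) : Reachable rs (normalizeS' rs φ) x ↔ Reachable rs φ x := by
  constructor
  · exact reachable_mono norm_edges_subset
  · rintro ⟨j, hj, hp⟩
    refine ⟨j, hj, ?_⟩
    induction hp with
    | refl => exact Relation.ReflTransGen.refl
    | @tail y c hb hstep ih =>
      refine ih.tail ?_
      have hy : Reachable rs φ y := ⟨j, hj, hb⟩
      show c ∈ ((normalizeS' rs φ) y).2
      unfold normalizeS'
      rw [if_pos hy]
      exact hstep

lemma reach_del_norm (y x : ι) :
    Reachable rs (delE (normalizeS' rs φ) y) x ↔ Reachable rs (delE φ y) x := by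
  constructor
  · refine reachable_mono ?_
    intro a
    rw [delE_edges, delE_edges]
    by_cases h : a = y
    · simp [h]
    · simp only [h, if_false]
      exact norm_edges_subset a
  · rintro ⟨j, hj, hp⟩
    refine ⟨j, hj, ?_⟩
    induction hp with
    | refl => exact Relation.ReflTransGen.refl
    | @tail z c hb hstep ih =>
      refine ih.tail ?_
      have hzy : z ≠ y := by
        intro h
        rw [h, delE_edges] at hstep
        simp at hstep
      have hz : Reachable rs (delE φ y) z := ⟨j, hj, hb⟩
      have hz' : Reachable rs φ z := reachable_mono (delE_edges_subset φ y) hz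
      rw [delE_edges] at hstep
      rw [ delE_edges]
      simp only [hzy, if_false] at hstep ⊢
      show c ∈ ((normalizeS' rs φ) z).2
      unfold normalizeS'
      rw [if_pos hz']
      exact hstep

lemma Rset_norm : Rset rs (normalizeS' rs φ) = Rset rs φ := by
  ext x; rw [mem_Rset, mem_Rset, reach_norm]

lemma Cvis_norm (y : ι) : Cvis rs (normalizeS' rs φ) y = Cvis rs φ y := by
  ext x; rw [mem_Cvis, mem_Cvis, reach_del_norm]

lemma winF_norm (m : ℕ) (j : ι) :
    winF rs (normalizeS' rs φ) m j ↔ winF rs φ m j := by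
  apply winF_congr Rset_norm Cvis_norm
  intro x hx
  rw [Rset_norm, mem_Rset] at hx
  unfold normalizeS'
  rw [if_pos hx]

end NormLemmas

/-- critical payment -/
noncomputable def critV (rs : Finset ι) (θ : ι → Report ι) (m : ℕ) (i : ι) : ℝ :=
  sInf {c : ℝ | 0 ≤ c ∧ winF rs (Function.update θ i (c, (θ i).2)) m i}

noncomputable def regionW (rs : Finset ι) (θ : ι → Report ι) (m : ℕ) (i : ι) : Set ℝ :=
  {c : ℝ | 0 ≤ c ∧ winF rs (Function.update θ i (c, (θ i).2)) m i}

lemma critV_eq_sInf (rs : Finset ι) (θ : ι → Report ι) (m : ℕ) (i : ι) :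
    critV rs θ m i = sInf (regionW rs θ m i) := rfl

lemma regionW_up {rs : Finset ι} {θ : ι → Report ι} {m : ℕ} {i : ι} {c c' : ℝ}
    (hc : c ∈ regionW rs θ m i) (hcc : c ≤ c') : c' ∈ regionW rs θ m i := by
  obtain ⟨h0, hw⟩ := hc
  rcases eq_or_lt_of_le hcc with rfl | hlt
  · exact ⟨h0, hw⟩
  · exact ⟨le_of_lt (lt_of_le_of_lt h0 hlt), bid_mono hlt hw⟩

lemma critV_nonneg (rs : Finset ι) (θ : ι → Report ι) (m : ℕ) (i : ι) :
    0 ≤ critV rs θ m i :=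
  Real.sInf_nonneg (fun _ hx => hx.1)

lemma regionW_bddBelow (rs : Finset ι) (θ : ι → Report ι) (m : ℕ) (i : ι) :
    BddBelow (regionW rs θ m i) :=
  ⟨0, fun _ hx => hx.1⟩

/-- if i wins with its reported (nonneg) value, that value is in the region -/
lemma self_mem_regionW {rs : Finset ι} {θ : ι → Report ι} {m : ℕ} {i : ι}
    (h0 : 0 ≤ (θ i).1) (hw : winF rs θ m i) : (θ i).1 ∈ regionW rs θ m i := by
  refine ⟨h0, ?_⟩
  have : Function.update θ i ((θ i).1, (θ i).2) = θ := by
    funext a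
    by_cases ha : a = i
    · subst ha; simp
    · simp [Function.update_of_ne ha]
  rw [this]
  exact hw

lemma win_of_crit_lt {rs : Finset ι} {θ : ι → Report ι} {m : ℕ} {i : ι} {v : ℝ}
    (hne : (regionW rs θ m i).Nonempty) (hlt : critV rs θ m i < v) :
    v ∈ regionW rs θ m i := by
  obtain ⟨c, hc, hcv⟩ := exists_lt_of_csInf_lt hne hlt
  exact regionW_up hc (le_of_lt hcv)

lemma crit_le_of_mem {rs : Finset ι} {θ : ι → Report ι} {m : ℕ} {i : ι} {c : ℝ}
    (hc : c ∈ regionW rs θ m i) : critV rs θ m i ≤ c :=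
  csInf_le (regionW_bddBelow rs θ m i) hc
lemma sumA (rs : Finset ι) (θ : ι → Report ι) (m : ℕ) :
    (∑ i, (if winF rs θ m i then (1 : ℕ) else 0)) = (Wset rs θ m).card := by
  rw [Wset, Finset.card_filter]

lemma reach_upd_self {rs : Finset ι} {θ : ι → Report ι} {i : ι} (X Y : Report ι) :
    Reachable rs (Function.update θ i X) i → Reachable rs (Function.update θ i Y) i := by
  intro h
  have h2 := reach_avoid_self h
  refine reachable_mono ?_ h2
  intro a
  rw [delE_edges]
  by_cases ha : a = i
  · simp [ha]
  · simp only [ha, if_false]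
    rw [Function.update_of_ne ha, Function.update_of_ne ha]

lemma upd_norm {rs : Finset ι} {φ : ι → Report ι} {i : ι} (c : ℝ)
    (hi : Reachable rs φ i) :
    Function.update (normalizeS' rs φ) i (c, (φ i).2)
      = normalizeS' rs (Function.update φ i (c, (φ i).2)) := by
  have hedges : ∀ x, ((Function.update φ i (c, (φ i).2)) x).2 = (φ x).2 := by
    intro x
    by_cases hx : x = i
    · subst hx; simp
    · rw [Function.update_of_ne hx]
  have hre : ∀ x, Reachable rs (Function.update φ i (c, (φ i).2)) x ↔ Reachable rs φ x :=
    fun x => reachable_congr_edges hedges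
  funext a
  by_cases ha : a = i
  · subst ha
    rw [Function.update_self]
    unfold normalizeS'
    rw [if_pos ((hre a).mpr hi), Function.update_self]
  · rw [Function.update_of_ne ha]
    unfold normalizeS'
    rw [Function.update_of_ne ha]
    by_cases hra : Reachable rs φ a
    · rw [if_pos hra, if_pos ((hre a).mpr hra)]
    · rw [if_neg hra, if_neg (fun h => hra ((hre a).mp h))]

lemma critV_norm {rs : Finset ι} {φ : ι → Report ι} {m : ℕ} {i : ι}
    (hi : Reachable rs φ i) :
    critV rs (normalizeS' rs φ) m i = critV rs φ m i := by
  unfold critV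
  congr 1
  ext c
  have h2 : ((normalizeS' rs φ) i).2 = (φ i).2 := by
    unfold normalizeS'; rw [if_pos hi]
  rw [h2]
  constructor
  · rintro ⟨h0, hw⟩
    refine ⟨h0, ?_⟩
    rw [upd_norm c hi] at hw
    exact (winF_norm m i).mp hw
  · rintro ⟨h0, hw⟩
    refine ⟨h0, ?_⟩
    rw [upd_norm c hi]
    exact (winF_norm m i).mpr hw

lemma Pnorm {rs : Finset ι} {φ : ι → Report ι} {m : ℕ} (i : ι) :
    (if winF rs (normalizeS' rs φ) m i then critV rs (normalizeS' rs φ) m i else 0)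
      = (if winF rs φ m i then critV rs φ m i else 0) := by
  by_cases hw : winF rs φ m i
  · rw [if_pos ((winF_norm m i).mpr hw), if_pos hw]
    exact critV_norm (mem_Rset.mp ((winF_iff' rs φ m i).mp hw).1)
  · rw [if_neg (fun h => hw ((winF_norm m i).mp h)), if_neg hw]

lemma winF_not_reach {rs : Finset ι} {θ : ι → Report ι} {m : ℕ} {i : ι}
    (h : ¬ Reachable rs θ i) : ¬ winF rs θ m i := by
  intro hw
  exact h (mem_Rset.mp ((winF_iff' rs θ m i).mp hw).1)

/-- bound on topSum-style list sums -/
lemma topSumAux_le (k : ℕ) (l : List ℝ) (M : ℝ) (hM : 0 ≤ M)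
    (h : ∀ x ∈ l, x ≤ M) : (l.take k).sum ≤ k * M := by
  have h1 : ∀ x ∈ l.take k, x ≤ M := fun x hx => h x (List.mem_of_mem_take hx)
  have h2 := List.sum_le_card_nsmul (l.take k) M h1
  have h3 : (l.take k).length ≤ k := by
    rw [List.length_take]; exact min_le_left _ _
  calc (l.take k).sum ≤ (l.take k).length • M := h2
    _ = ((l.take k).length : ℝ) * M := by rw [nsmul_eq_mul]
    _ ≤ (k : ℝ) * M := by
        apply mul_le_mul_of_nonneg_right _ hM
        exact_mod_cast h3

lemma RTG_to_del {θ : ι → Report ι} {wm j x : ι}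
    (hp : Relation.ReflTransGen (fun a b => a ≠ wm ∧ b ∈ (θ a).2) j x) :
    Relation.ReflTransGen (fun a b => b ∈ ((delE θ wm) a).2) j x := by
  induction hp with
  | refl => exact Relation.ReflTransGen.refl
  | tail hb hstep ih =>
    refine ih.tail ?_
    rw [delE_edges]
    simp only [hstep.1, if_false]
    exact hstep.2

end Mudan

/-- Theorem 1 (MUDAN): for all `n ≥ 1`, `m ≥ 1` there exist a single-demand `m`-unit
diffusion-auction mechanism `(A, P)` on `n` buyers and a map `w` selecting, on every valid
normalized profile allocating at least one item, a buyer who gets an item, such that the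
mechanism is IC, IR, ND, NW and `1/m`-weakly efficient: on every truthful profile with
all buyers reachable, the social welfare is at least `1/m` times the sum of the
`min {m, |B*|}` largest true valuations over `B*`, the set of buyers reachable from the
seller by a path avoiding `w` everywhere except possibly at its endpoint. -/
theorem mudan_exists (n m : ℕ) (hn : 1 ≤ n) (hm : 1 ≤ m) :
    ∃ (A : MechA (Fin n)) (P : MechP (Fin n))
      (w : Finset (Fin n) → (Fin n → Report (Fin n)) → Fin n),
      ProperS A P ∧
      (∀ rs θ, ValidS θ → NormalizedS rs θ → 1 ≤ ∑ i, A rs θ i →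
        A rs θ (w rs θ) = 1) ∧
      ICS A P ∧ IRS A P ∧ NDS P ∧ NWS m A ∧
      (∀ (rs : Finset (Fin n)) (v : Fin n → ℝ) (r : Fin n → Finset (Fin n)),
        (∀ i, 0 ≤ v i) →
        (∀ i, Reachable rs (fun k => (v k, r k)) i) →
        (fun (θ : Fin n → Report (Fin n)) =>
          (fun (Bs : Finset (Fin n)) =>
            SWS v A rs θ ≥ (1 / (m : ℝ)) * topSum (min m Bs.card) (Bs.val.map v))
          (Finset.univ.filter (fun i => ∃ j ∈ rs,
            Relation.ReflTransGen (fun a b => a ≠ w rs θ ∧ b ∈ (θ a).2) j i)))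
        (fun k => (v k, r k))) := by
  classical
  set A : MechA (Fin n) := fun rs θ i => if winF rs θ m i then 1 else 0 with hA
  set P : MechP (Fin n) := fun rs θ i => if winF rs θ m i then critV rs θ m i else 0 with hP
  set w : Finset (Fin n) → (Fin n → Report (Fin n)) → Fin n := fun rs θ =>
    if h : (Wset rs θ m).Nonempty then Classical.choose (exists_beta_max θ h)
    else ⟨0, hn⟩ with hwdef
  refine ⟨A, P, w, ?_, ?_, ?_, ?_, ?_, ?_, ?_⟩
  · -- ProperS
    intro rs θ _ _ i
    constructor
    · simp only [hA]; split_ifs <;> omega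
    · intro hnr
      have hnw := winF_not_reach (m := m) hnr
      simp only [hA, hP, if_neg hnw]
      exact ⟨trivial, trivial⟩
  · -- w gets an item
    intro rs θ _ _ hsum
    have hsA : (∑ i, A rs θ i) = (Wset rs θ m).card := by
      simp only [hA]; exact sumA rs θ m
    rw [hsA] at hsum
    have hne : (Wset rs θ m).Nonempty := Finset.card_pos.mp (by omega)
    have hspec := Classical.choose_spec (exists_beta_max θ hne)
    simp only [hA, hwdef, dif_pos hne]
    rw [if_pos (mem_Wset.mp hspec.1)]
  · -- ICS
    intro rs v r hv θ hθ i v'' r'' hv'' hsub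
    set φT := Function.update θ i (v i, r i) with hφT
    set φD := Function.update θ i (v'', r'') with hφD
    have hkey : ∀ φ : Fin n → Report (Fin n), utilS v A P rs (normalizeS rs φ) i
        = v i * ((if winF rs φ m i then (1:ℕ) else 0 : ℕ) : ℝ)
          - (if winF rs φ m i then critV rs φ m i else 0) := by
      intro φ
      unfold utilS
      simp only [hA, hP]
      rw [← normalizeS'_eq, Pnorm]
      simp only [winF_norm]
    rw [ge_iff_le, hkey φT, hkey φD]
    by_cases hreach : Reachable rs φT i
    · have hreachD : Reachable rs φD i := reach_upd_self _ _ hreach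
      have hφTi1 : (φT i).1 = v i := by rw [hφT, Function.update_self]
      have hφTi2 : (φT i).2 = r i := by rw [hφT, Function.update_self]
      have hφDi1 : (φD i).1 = v'' := by rw [hφD, Function.update_self]
      have hφDi2 : (φD i).2 = r'' := by rw [hφD, Function.update_self]
      have hcollT : Function.update φT i (v i, (φT i).2) = φT := by
        rw [hφTi2, hφT, Function.update_idem]
      have hTD : regionW rs φD m i ⊆ regionW rs φT m i := by
        rintro c ⟨h0, hwc⟩
        refine ⟨h0, ?_⟩
        have h1 : winF rs (Function.update θ i (c, r'')) m i := by
          have he : Function.update φD i (c, (φD i).2) = Function.update θ i (c, r'') := by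
            rw [hφDi2, hφD, Function.update_idem]
          rwa [he] at hwc
        have h2 := edge_mono (r1 := r i) hsub h1
        have he2 : Function.update φT i (c, (φT i).2) = Function.update θ i (c, r i) := by
          rw [hφTi2, hφT, Function.update_idem]
        rwa [he2]
      by_cases hwD : winF rs φD m i
      · have hDne : (regionW rs φD m i).Nonempty := by
          refine ⟨(φD i).1, self_mem_regionW ?_ hwD⟩
          rw [hφDi1]; exact hv''
        by_cases hwT : winF rs φT m i
        · rw [if_pos hwT, if_pos hwT, if_pos hwD, if_pos hwD]
          have hcc : critV rs φT m i ≤ critV rs φD m i :=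
            csInf_le_csInf (regionW_bddBelow rs φT m i) hDne hTD
          simp only [Nat.cast_one]
          linarith
        · rw [if_neg hwT, if_neg hwT, if_pos hwD, if_pos hwD]
          have hvc : v i ≤ critV rs φD m i := by
            by_contra hlt
            push_neg at hlt
            have hmem2 := hTD (win_of_crit_lt hDne hlt)
            have hwin : winF rs (Function.update φT i (v i, (φT i).2)) m i := hmem2.2
            rw [hφTi2, hφT, Function.update_idem] at hwin
            exact hwT hwin
          simp only [Nat.cast_one, Nat.cast_zero]
          linarith
      · rw [if_neg hwD, if_neg hwD]
        by_cases hwT : winF rs φT m i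
        · rw [if_pos hwT, if_pos hwT]
          have h0 : 0 ≤ (φT i).1 := by rw [hφTi1]; exact hv i
          have hle := crit_le_of_mem (self_mem_regionW h0 hwT)
          rw [hφTi1] at hle
          simp only [Nat.cast_one, Nat.cast_zero]
          linarith
        · rw [if_neg hwT, if_neg hwT]
    · have hnrD : ¬ Reachable rs φD i := fun h => hreach (reach_upd_self _ _ h)
      have hnwT := winF_not_reach (m := m) hreach
      have hnwD := winF_not_reach (m := m) hnrD
      simp [hnwT, hnwD]
  · -- IRS
    intro rs v r hv θ hθ i
    set φT := Function.update θ i (v i, r i) with hφT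
    have hkey : utilS v A P rs (normalizeS rs φT) i
        = v i * ((if winF rs φT m i then (1:ℕ) else 0 : ℕ) : ℝ)
          - (if winF rs φT m i then critV rs φT m i else 0) := by
      unfold utilS
      simp only [hA, hP]
      rw [← normalizeS'_eq, Pnorm]
      simp only [winF_norm]
    rw [hkey]
    by_cases hw : winF rs φT m i
    · rw [if_pos hw, if_pos hw]
      have h0 : 0 ≤ (φT i).1 := by rw [hφT, Function.update_self]; exact hv i
      have hle := crit_le_of_mem (self_mem_regionW h0 hw)
      have hveq : (φT i).1 = v i := by rw [hφT, Function.update_self]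
      rw [hveq] at hle
      simp only [Nat.cast_one]
      linarith
    · rw [if_neg hw, if_neg hw]
      simp
  · -- NDS
    intro rs θ _ _
    unfold RVS
    apply Finset.sum_nonneg
    intro i _
    simp only [hP]
    split_ifs with h
    · exact critV_nonneg rs θ m i
    · exact le_refl 0
  · -- NWS
    intro rs θ _ _
    have hsA : (∑ i, A rs θ i) = (Wset rs θ m).card := by
      simp only [hA]; exact sumA rs θ m
    rw [hsA, Wset_card]
    rfl
  · -- efficiency
    intro rs v r hv hreach
    dsimp only
    set θv : Fin n → Report (Fin n) := fun k => (v k, r k) with hθv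
    have hRall : Rset rs θv = Finset.univ := by
      ext x
      simp only [mem_Rset, Finset.mem_univ, iff_true]
      exact hreach x
    have hWcard : (Wset rs θv m).card = min m n := by
      rw [Wset_card, hRall, Finset.card_univ, Fintype.card_fin]
    have hWne : (Wset rs θv m).Nonempty := by
      apply Finset.card_pos.mp
      rw [hWcard]
      omega
    have hwval : w rs θv = Classical.choose (exists_beta_max θv hWne) := by
      simp only [hwdef]
      rw [dif_pos hWne]
    obtain ⟨hwmxW, hwmxmax⟩ := Classical.choose_spec (exists_beta_max θv hWne)
    rw [hwval]
    set wmx := Classical.choose (exists_beta_max θv hWne) with hwmx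
    -- bound on members of B*
    have hBbound : ∀ x : Fin n, (∃ j ∈ rs, Relation.ReflTransGen
        (fun a b => a ≠ wmx ∧ b ∈ r a) j x) → v x ≤ v wmx := by
      intro x hx
      by_cases hxw : x = wmx
      · exact le_of_eq (by rw [hxw])
      · have hxC : x ∈ Cvis rs θv wmx := by
          rw [mem_Cvis]
          refine ⟨hxw, ?_⟩
          obtain ⟨j, hj, hp⟩ := hx
          exact ⟨j, hj, RTG_to_del hp⟩
        by_cases hxW : x ∈ Wset rs θv m
        · have h := hwmxmax x hxW hxw
          rw [betaLT_iff] at h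
          rcases h with h | h
          · exact le_of_lt h
          · exact le_of_eq h.1
        · rcases betaLT_trichotomy θv x wmx with h | h | h
          · rw [betaLT_iff] at h
            rcases h with h | h
            · exact le_of_lt h
            · exact le_of_eq h.1
          · exact absurd h hxw
          · exact absurd (clean_max_winner hwmxW hwmxmax hxC h) hxW
    -- social welfare
    have hSWeq : (SWS v A rs θv) = ∑ x ∈ Wset rs θv m, v x := by
      unfold SWS
      simp only [hA]
      rw [Wset, Finset.sum_filter]
      apply Finset.sum_congr rfl
      intro x _
      split_ifs with h <;> simp
    have hvw_le : v wmx ≤ SWS v A rs θv := by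
      rw [hSWeq]
      exact Finset.single_le_sum (fun x _ => hv x) hwmxW
    have hvw0 : 0 ≤ v wmx := hv wmx
    rw [ge_iff_le]
    set BsF := Finset.filter
      (fun i => ∃ j ∈ rs, Relation.ReflTransGen (fun a b => a ≠ wmx ∧ b ∈ r a) j i)
      Finset.univ with hBsF
    have htop : topSum (min m BsF.card) (Multiset.map v BsF.val)
        ≤ ((min m BsF.card : ℕ) : ℝ) * v wmx := by
      unfold topSum
      apply topSumAux_le _ _ _ hvw0
      intro x hx
      rw [List.mem_reverse, Multiset.mem_sort] at hx
      obtain ⟨b, hb, rfl⟩ := Multiset.mem_map.mp hx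
      have hbB : b ∈ BsF := hb
      rw [hBsF, Finset.mem_filter] at hbB
      exact hBbound b hbB.2
    have hmin : ((min m BsF.card : ℕ) : ℝ) * v wmx ≤ (m : ℝ) * v wmx := by
      apply mul_le_mul_of_nonneg_right _ hvw0
      exact_mod_cast min_le_left m BsF.card
    have hm0 : (0:ℝ) < (m : ℝ) := by exact_mod_cast hm
    calc (1 / (m:ℝ)) * topSum (min m BsF.card) (Multiset.map v BsF.val)
        ≤ (1 / (m:ℝ)) * ((m : ℝ) * v wmx) := by
          apply mul_le_mul_of_nonneg_left (le_trans htop hmin)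
          positivity
      _ = v wmx := by field_simp
      _ ≤ SWS v A rs θv := hvw_le
end

section
/- Key combinatorial identity behind the non-deficit property of MUDAR (core of Lemma 4): let m ≥ 1 and K be natural numbers and v : Fin K → ℝ be injective, and suppose that for every k < K at most m − 1 indices j < k satisfy v(j) > v(k) (each new value is among the m largest of its prefix). Then the multiset {ψ(k) : m ≤ k < K} is equal to the multiset {v(k) : k ∈ W_R}; in particular Σ_{k = m}^{K−1} ψ(k) = Σ_{k ∈ W_R} v(k). -/
open scoped Classical

/-- For a finite set `s` of reals with at least `r` elements, the `r`-th largest element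
of `s` (1-based): the entry at position `r − 1` of `s` sorted in decreasing order. -/
noncomputable def kthLargest (s : Finset ℝ) (r : ℕ) : ℝ :=
  (s.sort (· ≤ ·)).reverse.getD (r - 1) 0

/-- `ψ k`: the `(m+1)`-st largest element of the prefix `{v 0, v 1, …, v k}`. -/
noncomputable def psi {K : ℕ} (m : ℕ) (v : Fin K → ℝ) (k : ℕ) : ℝ :=
  kthLargest ((Finset.univ.filter (fun j : Fin K => (j : ℕ) ≤ k)).image v) (m + 1)

/-- `W_R`: the indices `k` such that `v k` is not among the `m` largest of all `K` values,
i.e. at least `m` indices `j` satisfy `v j > v k`. -/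
noncomputable def WR {K : ℕ} (m : ℕ) (v : Fin K → ℝ) : Finset (Fin K) :=
  Finset.univ.filter (fun k => m ≤ (Finset.univ.filter (fun j : Fin K => v k < v j)).card)

private lemma filter_gt_sorted (l : List ℝ) (hl : l.Pairwise (· < ·)) :
    ∀ i (h : i < l.length),
      (l.filter (fun y => l[i] < y)).length = l.length - 1 - i := by
  induction l with
  | nil => intro i h; simp at h
  | cons a l ih =>
    intro i h
    rcases List.pairwise_cons.mp hl with ⟨ha, hl'⟩
    cases i with
    | zero =>
      simp only [List.getElem_cons_zero, List.filter_cons]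
      rw [List.filter_eq_self.mpr]
      · simp
      · intro y hy; simpa using ha y hy
    | succ i =>
      have h' : i < l.length := by simpa using h
      have h2 : (a :: l)[i+1] = l[i] := by simp
      have h3 : ¬ (l[i] < a) := not_lt.mpr (le_of_lt (ha _ (l.getElem_mem h')))
      rw [h2, List.filter_cons, if_neg (by simpa using h3), ih hl' i h']
      simp; omega

private lemma kth_spec (s : Finset ℝ) (r : ℕ) (h1 : 1 ≤ r) (h2 : r ≤ s.card) :
    kthLargest s r ∈ s ∧ (s.filter (fun y => kthLargest s r < y)).card = r - 1 := by
  set l := s.sort (· ≤ ·) with hl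
  have hlen : l.length = s.card := Finset.length_sort _
  have hi : r - 1 < l.reverse.length := by rw [List.length_reverse]; omega
  have hk : kthLargest s r = l[l.length - 1 - (r-1)]'(by omega) := by
    rw [kthLargest, List.getD_eq_getElem _ _ hi, List.getElem_reverse]
  have hmem : kthLargest s r ∈ s := by
    rw [hk]
    exact (Finset.mem_sort (α := ℝ) (· ≤ ·)).mp (List.getElem_mem _)
  refine ⟨hmem, ?_⟩
  have hcnt : (l.filter (fun y => kthLargest s r < y)).length = r - 1 := by
    rw [hk, filter_gt_sorted l (Finset.sortedLT_sort s).pairwise _ (by omega)]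
    omega
  have heq : (s.filter (fun y => kthLargest s r < y)).card
      = (l.filter (fun y => kthLargest s r < y)).length := by
    rw [Finset.card, Finset.filter_val, ← Finset.sort_eq s (· ≤ ·), ← hl,
      Multiset.filter_coe, Multiset.coe_card]
  rw [heq, hcnt]

private lemma kth_unique (s : Finset ℝ) (x y : ℝ) (hx : x ∈ s) (hy : y ∈ s)
    (h : (s.filter (fun z => x < z)).card = (s.filter (fun z => y < z)).card) : x = y := by
  by_contra hne
  wlog hxy : x < y generalizing x y
  · exact this y x hy hx h.symm (Ne.symm hne) (by cases lt_or_gt_of_ne hne with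
      | inl h => exact absurd h hxy | inr h => exact h)
  have hsub : insert y (s.filter (fun z => y < z)) ⊆ s.filter (fun z => x < z) := by
    intro z hz
    rcases Finset.mem_insert.mp hz with rfl | hz
    · exact Finset.mem_filter.mpr ⟨hy, hxy⟩
    · rcases Finset.mem_filter.mp hz with ⟨h1, h2⟩
      exact Finset.mem_filter.mpr ⟨h1, hxy.trans h2⟩
  have : (s.filter (fun z => y < z)).card + 1 ≤ (s.filter (fun z => x < z)).card := by
    have := Finset.card_le_card hsub
    rwa [Finset.card_insert_of_notMem (by simp)] at this
  omega

private lemma kth_char (s : Finset ℝ) (r : ℕ) (x : ℝ) (h1 : 1 ≤ r) (hx : x ∈ s)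
    (hc : (s.filter (fun y => x < y)).card = r - 1) : kthLargest s r = x := by
  have h2 : r ≤ s.card := by
    have hsub : insert x (s.filter (fun y => x < y)) ⊆ s := by
      intro z hz
      rcases Finset.mem_insert.mp hz with rfl | hz
      · exact hx
      · exact Finset.filter_subset _ _ hz
    have := Finset.card_le_card hsub
    rw [Finset.card_insert_of_notMem (by simp)] at this
    omega
  obtain ⟨hmem, hcnt⟩ := kth_spec s r h1 h2
  exact kth_unique s _ x hmem hx (by rw [hcnt, hc])

/-- number of indices `i ≤ k` with `v i > v j` -/
noncomputable def bcnt {K : ℕ} (v : Fin K → ℝ) (j : Fin K) (k : ℕ) : ℕ :=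
  (Finset.univ.filter (fun i : Fin K => (i : ℕ) ≤ k ∧ v j < v i)).card

private lemma bcnt_mono {K : ℕ} (v : Fin K → ℝ) (j : Fin K) {k k' : ℕ} (h : k ≤ k') :
    bcnt v j k ≤ bcnt v j k' := by
  apply Finset.card_le_card
  intro i hi
  simp only [Finset.mem_filter, Finset.mem_univ, true_and] at hi ⊢
  exact ⟨hi.1.trans h, hi.2⟩

private lemma card_prefix {K k : ℕ} (hk : k < K) :
    (Finset.univ.filter (fun j : Fin K => (j : ℕ) ≤ k)).card = k + 1 := by
  have h : (Finset.univ.filter (fun j : Fin K => (j : ℕ) ≤ k)) = Finset.Iic (⟨k, hk⟩ : Fin K) := by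
    ext j; simp [Fin.le_def]
  rw [h, Fin.card_Iic]

private lemma filter_image_gt {K : ℕ} {v : Fin K → ℝ} (hv : Function.Injective v)
    (j : Fin K) (k : ℕ) :
    (((Finset.univ.filter (fun i : Fin K => (i : ℕ) ≤ k)).image v).filter
      (fun y => v j < y)).card = bcnt v j k := by
  rw [Finset.filter_image, Finset.card_image_of_injective _ hv, Finset.filter_filter, bcnt]

private lemma psi_char {K m : ℕ} {v : Fin K → ℝ} (hv : Function.Injective v)
    {j : Fin K} {k : ℕ} (hjk : (j : ℕ) ≤ k) (hb : bcnt v j k = m) :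
    psi m v k = v j := by
  apply kth_char _ _ _ (by omega)
  · exact Finset.mem_image_of_mem v (by simp [hjk])
  · rw [filter_image_gt hv j k, hb]; omega

private lemma psi_spec {K m : ℕ} {v : Fin K → ℝ} (hv : Function.Injective v)
    {k : ℕ} (hk1 : m ≤ k) (hk2 : k < K) :
    ∃ j : Fin K, (j : ℕ) ≤ k ∧ bcnt v j k = m ∧ psi m v k = v j := by
  have hcard : ((Finset.univ.filter (fun i : Fin K => (i : ℕ) ≤ k)).image v).card = k + 1 := by
    rw [Finset.card_image_of_injective _ hv, card_prefix hk2]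
  obtain ⟨hmem, hcnt⟩ := kth_spec ((Finset.univ.filter (fun i : Fin K => (i : ℕ) ≤ k)).image v)
    (m + 1) (by omega) (by omega)
  obtain ⟨j, hj, hje⟩ := Finset.mem_image.mp hmem
  have hjk : (j : ℕ) ≤ k := by simpa using hj
  refine ⟨j, hjk, ?_, hje.symm⟩
  rw [← filter_image_gt hv j k, hje]
  simpa using hcnt

private lemma bcnt_step {K m : ℕ} {v : Fin K → ℝ} (hm : 1 ≤ m)
    (hpre : ∀ k : Fin K,
      (Finset.univ.filter (fun j : Fin K => (j : ℕ) < (k : ℕ) ∧ v k < v j)).card ≤ m - 1)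
    {j : Fin K} {k : ℕ} (hk : k + 1 < K) (hb : m ≤ bcnt v j k) :
    m + 1 ≤ bcnt v j (k + 1) := by
  set a : Fin K := ⟨k + 1, hk⟩ with ha
  have hlt : v j < v a := by
    by_contra hle
    push_neg at hle
    have hsub : (Finset.univ.filter (fun i : Fin K => (i : ℕ) ≤ k ∧ v j < v i))
        ⊆ (Finset.univ.filter (fun i : Fin K => (i : ℕ) < (a : ℕ) ∧ v a < v i)) := by
      intro i hi
      simp only [Finset.mem_filter, Finset.mem_univ, true_and] at hi ⊢
      exact ⟨by show (i : ℕ) < k + 1; omega, lt_of_le_of_lt hle hi.2⟩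
    have := (hb.trans (Finset.card_le_card hsub)).trans (hpre a)
    omega
  have hsub : insert a (Finset.univ.filter (fun i : Fin K => (i : ℕ) ≤ k ∧ v j < v i))
      ⊆ (Finset.univ.filter (fun i : Fin K => (i : ℕ) ≤ k + 1 ∧ v j < v i)) := by
    intro i hi
    rcases Finset.mem_insert.mp hi with rfl | hi
    · simp only [Finset.mem_filter, Finset.mem_univ, true_and]
      exact ⟨le_refl _, hlt⟩
    · simp only [Finset.mem_filter, Finset.mem_univ, true_and] at hi ⊢
      exact ⟨by omega, hi.2⟩
  have hna : a ∉ (Finset.univ.filter (fun i : Fin K => (i : ℕ) ≤ k ∧ v j < v i)) := by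
    simp [ha]
  have := Finset.card_le_card hsub
  rw [Finset.card_insert_of_notMem hna] at this
  calc m + 1 ≤ bcnt v j k + 1 := by omega
    _ ≤ bcnt v j (k + 1) := this

private lemma bcnt_strict {K m : ℕ} {v : Fin K → ℝ} (hm : 1 ≤ m)
    (hpre : ∀ k : Fin K,
      (Finset.univ.filter (fun j : Fin K => (j : ℕ) < (k : ℕ) ∧ v k < v j)).card ≤ m - 1)
    {j : Fin K} {k k' : ℕ} (hkk : k < k') (hk' : k' < K) (hb : m ≤ bcnt v j k) :
    m + 1 ≤ bcnt v j k' :=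
  (bcnt_step hm hpre (by omega) hb).trans (bcnt_mono v j (by omega))

private lemma bcnt_self {K m : ℕ} {v : Fin K → ℝ}
    (hpre : ∀ k : Fin K,
      (Finset.univ.filter (fun j : Fin K => (j : ℕ) < (k : ℕ) ∧ v k < v j)).card ≤ m - 1)
    (j : Fin K) : bcnt v j (j : ℕ) ≤ m - 1 := by
  have heq : (Finset.univ.filter (fun i : Fin K => (i : ℕ) ≤ (j : ℕ) ∧ v j < v i))
      = (Finset.univ.filter (fun i : Fin K => (i : ℕ) < (j : ℕ) ∧ v j < v i)) := by
    ext i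
    simp only [Finset.mem_filter, Finset.mem_univ, true_and]
    constructor
    · rintro ⟨h1, h2⟩
      refine ⟨?_, h2⟩
      rcases lt_or_eq_of_le h1 with h | h
      · exact h
      · exfalso; exact absurd h2 (by rw [Fin.val_eq_val] at h; rw [← h]; exact lt_irrefl _)
    · rintro ⟨h1, h2⟩; exact ⟨le_of_lt h1, h2⟩
  rw [bcnt, heq]
  exact hpre j

private lemma bcnt_step_le {K : ℕ} (v : Fin K → ℝ) (j : Fin K) (k : ℕ) :
    bcnt v j (k + 1) ≤ bcnt v j k + 1 := by
  by_cases hk : k + 1 < K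
  · set a : Fin K := ⟨k + 1, hk⟩
    have hsub : (Finset.univ.filter (fun i : Fin K => (i : ℕ) ≤ k + 1 ∧ v j < v i))
        ⊆ insert a (Finset.univ.filter (fun i : Fin K => (i : ℕ) ≤ k ∧ v j < v i)) := by
      intro i hi
      simp only [Finset.mem_filter, Finset.mem_univ, true_and] at hi
      rcases Nat.lt_or_ge (i : ℕ) (k + 1) with h | h
      · apply Finset.mem_insert_of_mem
        simp only [Finset.mem_filter, Finset.mem_univ, true_and]
        exact ⟨by omega, hi.2⟩
      · have hia : i = a := Fin.ext (show (i : ℕ) = k + 1 by omega)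
        exact hia ▸ Finset.mem_insert_self _ _
    calc bcnt v j (k + 1) ≤ _ := Finset.card_le_card hsub
      _ ≤ bcnt v j k + 1 := Finset.card_insert_le _ _
  · have heq : (Finset.univ.filter (fun i : Fin K => (i : ℕ) ≤ k + 1 ∧ v j < v i))
        = (Finset.univ.filter (fun i : Fin K => (i : ℕ) ≤ k ∧ v j < v i)) := by
      ext i
      have := i.isLt
      simp only [Finset.mem_filter, Finset.mem_univ, true_and]
      constructor
      · rintro ⟨h1, h2⟩; exact ⟨by omega, h2⟩
      · rintro ⟨h1, h2⟩; exact ⟨by omega, h2⟩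
    rw [bcnt, heq]
    exact Nat.le_succ _

private lemma bcnt_total {K : ℕ} (v : Fin K → ℝ) (j : Fin K) :
    bcnt v j (K - 1) = (Finset.univ.filter (fun i : Fin K => v j < v i)).card := by
  rw [bcnt]
  congr 1
  ext i
  have := i.isLt
  simp only [Finset.mem_filter, Finset.mem_univ, true_and]
  constructor
  · rintro ⟨_, h2⟩; exact h2
  · intro h2; exact ⟨by omega, h2⟩

private lemma wr_surj {K m : ℕ} {v : Fin K → ℝ} (hm : 1 ≤ m)
    (hpre : ∀ k : Fin K,
      (Finset.univ.filter (fun j : Fin K => (j : ℕ) < (k : ℕ) ∧ v k < v j)).card ≤ m - 1)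
    {j : Fin K} (hj : j ∈ WR m v) :
    ∃ k : ℕ, m ≤ k ∧ k < K ∧ (j : ℕ) ≤ k ∧ bcnt v j k = m := by
  have hK : 0 < K := j.pos
  have htot : m ≤ bcnt v j (K - 1) := by
    rw [bcnt_total]
    exact (Finset.mem_filter.mp hj).2
  have hex : ∃ k, m ≤ bcnt v j k := ⟨K - 1, htot⟩
  set k0 := Nat.find hex with hk0
  have hP : m ≤ bcnt v j k0 := Nat.find_spec hex
  have hk0le : k0 ≤ K - 1 := Nat.find_le htot
  have hjlt : (j : ℕ) < k0 := by
    by_contra hc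
    push_neg at hc
    have h1 : bcnt v j k0 ≤ bcnt v j (j : ℕ) := bcnt_mono v j hc
    have h2 := bcnt_self hpre j
    omega
  have hnP : ¬ m ≤ bcnt v j (k0 - 1) := Nat.find_min hex (by omega)
  have hle : bcnt v j k0 ≤ bcnt v j (k0 - 1) + 1 := by
    have := bcnt_step_le v j (k0 - 1)
    have hk0eq : k0 - 1 + 1 = k0 := by omega
    rwa [hk0eq] at this
  have heq : bcnt v j k0 = m := by omega
  have hk0K : k0 < K := by omega
  have hmk : m ≤ k0 := by
    have hsub : insert j (Finset.univ.filter (fun i : Fin K => (i : ℕ) ≤ k0 ∧ v j < v i))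
        ⊆ (Finset.univ.filter (fun i : Fin K => (i : ℕ) ≤ k0)) := by
      intro i hi
      rcases Finset.mem_insert.mp hi with rfl | hi
      · simp only [Finset.mem_filter, Finset.mem_univ, true_and]; omega
      · simp only [Finset.mem_filter, Finset.mem_univ, true_and] at hi ⊢
        exact hi.1
    have hjn : j ∉ (Finset.univ.filter (fun i : Fin K => (i : ℕ) ≤ k0 ∧ v j < v i)) := by
      simp
    have hcard := Finset.card_le_card hsub
    rw [Finset.card_insert_of_notMem hjn, card_prefix hk0K] at hcard
    have : bcnt v j k0 + 1 ≤ k0 + 1 := hcard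
    omega
  exact ⟨k0, hmk, hk0K, by omega, heq⟩

/-- Key combinatorial identity behind the non-deficit property of MUDAR (core of Lemma 4):
if `v : Fin K → ℝ` is injective and each new value is among the `m` largest of its prefix,
then the multiset `{ψ k : m ≤ k < K}` equals the multiset `{v k : k ∈ W_R}`; in
particular, the corresponding sums agree. -/
theorem psi_multiset_eq_WR (m K : ℕ) (hm : 1 ≤ m) (v : Fin K → ℝ)
    (hv : Function.Injective v)
    (hpre : ∀ k : Fin K,
      (Finset.univ.filter (fun j : Fin K => (j : ℕ) < (k : ℕ) ∧ v k < v j)).card ≤ m - 1) :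
    (Finset.Ico m K).val.map (psi m v) = (WR m v).val.map v ∧
      ∑ k ∈ Finset.Ico m K, psi m v k = ∑ k ∈ WR m v, v k := by
  have hinj : Set.InjOn (psi m v) ↑(Finset.Ico m K) := by
    intro k1 hk1 k2 hk2 heq
    simp only [Finset.coe_Ico, Set.mem_Ico] at hk1 hk2
    have key : ∀ a b : ℕ, m ≤ a → a < K → m ≤ b → b < K → a < b →
        psi m v a = psi m v b → False := by
      intro a b ha1 ha2 hb1 hb2 hab habe
      obtain ⟨j1, hj1k, hc1, he1⟩ := psi_spec hv ha1 ha2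
      obtain ⟨j2, hj2k, hc2, he2⟩ := psi_spec hv hb1 hb2
      have hj12 : j1 = j2 := hv (by rw [← he1, ← he2, habe])
      subst hj12
      have := bcnt_strict hm hpre hab hb2 (le_of_eq hc1.symm)
      omega
    rcases Nat.lt_trichotomy k1 k2 with h | h | h
    · exact absurd (key k1 k2 hk1.1 hk1.2 hk2.1 hk2.2 h heq) not_false
    · exact h
    · exact absurd (key k2 k1 hk2.1 hk2.2 hk1.1 hk1.2 h heq.symm) not_false
  have himg : (Finset.Ico m K).image (psi m v) = (WR m v).image v := by
    ext x
    simp only [Finset.mem_image, Finset.mem_Ico]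
    constructor
    · rintro ⟨k, hk, rfl⟩
      obtain ⟨j, hjk, hb, he⟩ := psi_spec hv hk.1 hk.2
      refine ⟨j, ?_, he.symm⟩
      rw [WR, Finset.mem_filter]
      refine ⟨Finset.mem_univ _, ?_⟩
      rw [← bcnt_total]
      calc m = bcnt v j k := hb.symm
        _ ≤ bcnt v j (K - 1) := bcnt_mono v j (by omega)
    · rintro ⟨j, hj, rfl⟩
      obtain ⟨k, hk1, hk2, hjk, hb⟩ := wr_surj hm hpre hj
      exact ⟨k, ⟨hk1, hk2⟩, psi_char hv hjk hb⟩
  have hmul : (Finset.Ico m K).val.map (psi m v) = (WR m v).val.map v := by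
    rw [← Finset.image_val_of_injOn hinj, himg,
      Finset.image_val_of_injOn (hv.injOn)]
  exact ⟨hmul, congrArg Multiset.sum hmul⟩
end

section
/- Bumping lemma for prefix order statistics (intermediate step in the non-deficit proof of MUDAR): let m ≥ 1 and K be natural numbers, v : Fin K → ℝ injective, and let k satisfy m ≤ k < K. If at most m − 1 indices j < k satisfy v(j) > v(k), then the (m+1)-st largest element of {v(0), …, v(k)} equals the m-th largest element of {v(0), …, v(k−1)}. -/
open scoped Classical

private lemma card_filter_lt_fin (K k : ℕ) (hk : k ≤ K) :
    (Finset.univ.filter (fun j : Fin K => (j : ℕ) < k)).card = k := by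
  have h : ∀ m ∈ Finset.range k, m < K := fun m hm =>
    lt_of_lt_of_le (Finset.mem_range.mp hm) hk
  have : (Finset.univ.filter (fun j : Fin K => (j : ℕ) < k)) =
      (Finset.range k).attachFin h := by
    ext j
    simp [Finset.mem_attachFin]
  rw [this, Finset.card_attachFin, Finset.card_range]

private lemma getD_eq_getElem' (l : List ℝ) (n : ℕ) (h : n < l.length) :
    l.getD n 0 = l[n] := by
  simp [List.getD_eq_getElem?_getD, List.getElem?_eq_getElem h]

/-- Bumping lemma for prefix order statistics: if `m ≤ k < K`, `v` is injective, and at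
most `m − 1` indices `j < k` satisfy `v j > v k`, then the `(m+1)`-st largest element of
`{v 0, …, v k}` equals the `m`-th largest element of `{v 0, …, v (k−1)}`. -/
theorem bumping_lemma (m K : ℕ) (hm : 1 ≤ m) (v : Fin K → ℝ)
    (hv : Function.Injective v) (k : ℕ) (hk1 : m ≤ k) (hk2 : k < K)
    (h : (Finset.univ.filter
        (fun j : Fin K => (j : ℕ) < k ∧ v ⟨k, hk2⟩ < v j)).card ≤ m - 1) :
    kthLargest ((Finset.univ.filter (fun j : Fin K => (j : ℕ) ≤ k)).image v) (m + 1) =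
      kthLargest ((Finset.univ.filter (fun j : Fin K => (j : ℕ) < k)).image v) m := by
  set x : ℝ := v ⟨k, hk2⟩ with hx
  set S : Finset ℝ := (Finset.univ.filter (fun j : Fin K => (j : ℕ) ≤ k)).image v with hS
  set T : Finset ℝ := (Finset.univ.filter (fun j : Fin K => (j : ℕ) < k)).image v with hT
  -- cardinalities
  have hcardS : S.card = k + 1 := by
    rw [hS, Finset.card_image_of_injective _ hv]
    have : (Finset.univ.filter (fun j : Fin K => (j : ℕ) ≤ k)) =
        (Finset.univ.filter (fun j : Fin K => (j : ℕ) < k + 1)) := by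
      ext j; simp [Nat.lt_succ_iff]
    rw [this, card_filter_lt_fin K (k + 1) hk2]
  have hcardT : T.card = k := by
    rw [hT, Finset.card_image_of_injective _ hv]
    exact card_filter_lt_fin K k (le_of_lt hk2)
  -- T = S.erase x
  have hxS : x ∈ S := by
    rw [hS]
    exact Finset.mem_image.mpr ⟨⟨k, hk2⟩, by simp, rfl⟩
  have hTS : T = S.erase x := by
    ext y
    simp only [hT, hS, Finset.mem_erase, Finset.mem_image, Finset.mem_filter,
      Finset.mem_univ, true_and]
    constructor
    · rintro ⟨j, hj, rfl⟩
      refine ⟨fun hc => ?_, ⟨j, le_of_lt hj, rfl⟩⟩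
      have h2 : j = ⟨k, hk2⟩ := hv hc
      have h3 : (j : ℕ) = k := congrArg Fin.val h2
      omega
    · rintro ⟨hne, j, hj, rfl⟩
      refine ⟨j, ?_, rfl⟩
      rcases lt_or_eq_of_le hj with h' | h'
      · exact h'
      · exfalso; apply hne; rw [hx]; congr 1; exact Fin.ext h'
  -- the count hypothesis transferred to S
  have hcount : (S.filter (fun y => x < y)).card ≤ m - 1 := by
    rw [hS, Finset.filter_image]
    rw [Finset.card_image_of_injective _ hv]
    refine le_trans (le_of_eq ?_) h
    congr 1
    ext j
    simp only [Finset.mem_filter, Finset.mem_univ, true_and]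
    constructor
    · rintro ⟨hj, hlt⟩
      rcases lt_or_eq_of_le hj with h' | h'
      · exact ⟨h', hlt⟩
      · exfalso
        have : j = ⟨k, hk2⟩ := Fin.ext h'
        rw [this] at hlt
        exact lt_irrefl _ hlt
    · rintro ⟨hj, hlt⟩
      exact ⟨le_of_lt hj, hlt⟩
  -- sorted lists
  set l : List ℝ := S.sort (· ≤ ·) with hl
  set l' : List ℝ := T.sort (· ≤ ·) with hl'
  have hlen : l.length = k + 1 := by rw [hl, Finset.length_sort, hcardS]
  have hlen' : l'.length = k := by rw [hl', Finset.length_sort, hcardT]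
  have hsorted : l.Pairwise (· ≤ ·) := Finset.pairwise_sort _ _
  have hsortedlt : l.SortedLT := Finset.sortedLT_sort _
  have hxl : x ∈ l := (Finset.mem_sort _).mpr hxS
  -- l' = l.erase x
  have herase : l' = l.erase x := by
    refine List.Perm.eq_of_pairwise' (Finset.pairwise_sort _ _)
      (hsorted.sublist List.erase_sublist) ?_
    rw [← Multiset.coe_eq_coe, ← Multiset.coe_erase, hl, hl',
      Finset.sort_eq, Finset.sort_eq, hTS, Finset.erase_val]
  -- the index of x in l is large
  set i : ℕ := l.idxOf x with hi
  have hilt : i < l.length := List.idxOf_lt_length_iff.mpr hxl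
  have hgetI : l[i]'hilt = x := List.getElem_idxOf hilt
  have hibig : k - m < i := by
    by_contra hc
    push_neg at hc
    -- build an injection from Ico (i+1) (k+1) into S.filter (x < ·)
    have hinj : (Finset.Ico (i + 1) (k + 1)).card ≤ (S.filter (fun y => x < y)).card := by
      apply Finset.card_le_card_of_injOn (fun j => l.getD j 0)
      · intro j hj
        simp only [Finset.mem_coe, Finset.mem_Ico] at hj
        have hjlen : j < l.length := by omega
        beta_reduce
        rw [getD_eq_getElem' l j hjlen]
        refine Finset.mem_filter.mpr ⟨?_, ?_⟩
        · exact (Finset.mem_sort _).mp (l.getElem_mem hjlen)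
        · rw [← hgetI]
          exact List.SortedLT.strictMono_get hsortedlt
            (show (⟨i, hilt⟩ : Fin l.length) < ⟨j, hjlen⟩ by
              simp only [Fin.mk_lt_mk]; omega)
      · intro a ha b hb hab
        simp only [Finset.coe_Ico, Set.mem_Ico] at ha hb
        simp only [] at hab
        have halen : a < l.length := by omega
        have hblen : b < l.length := by omega
        rw [getD_eq_getElem' l a halen, getD_eq_getElem' l b hblen] at hab
        have := List.SortedLT.strictMono_get hsortedlt |>.injective
          (show l.get ⟨a, halen⟩ = l.get ⟨b, hblen⟩ by simpa using hab)
        simpa using congrArg Fin.val this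
    rw [Nat.card_Ico] at hinj
    omega
  -- final computation
  show l.reverse.getD (m + 1 - 1) 0 = l'.reverse.getD (m - 1) 0
  have hm1 : m + 1 - 1 = m := rfl
  have hrevlen : m < l.reverse.length := by rw [List.length_reverse, hlen]; omega
  have hrevlen' : m - 1 < l'.reverse.length := by rw [List.length_reverse, hlen']; omega
  rw [hm1, getD_eq_getElem' _ m hrevlen, getD_eq_getElem' _ (m - 1) hrevlen',
    List.getElem_reverse, List.getElem_reverse]
  have e1 : l.length - 1 - m = k - m := by omega
  have e2 : l'.length - 1 - (m - 1) = k - m := by omega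
  have hkm : k - m < (l.erase x).length := by
    rw [← herase, hlen']; omega
  calc l[l.length - 1 - m] = l[k - m]'(by omega) := by congr 1
    _ = (l.eraseIdx i)[k - m]'(by rwa [← List.erase_eq_eraseIdx_of_idxOf hi.symm]) := by
        rw [List.getElem_eraseIdx_of_lt _ hibig]
    _ = (l.erase x)[k - m]'hkm := by
        congr 1
        rw [List.erase_eq_eraseIdx_of_idxOf hi.symm]
    _ = l'[l'.length - 1 - (m - 1)] := by
        congr 1
        · exact herase.symm
        · omega
end

section
/- Reachability correspondence for the multi-to-single-demand reduction: for every normalized multi-demand global profile η' with constructed single-demand profile θ' on B̃ = B × {1,…,m}, a buyer i ∈ B is reachable from the seller s in G_{η'} if and only if (i,1) is reachable from s in the constructed graph of θ', if and only if (i,j) is reachable from s in that graph for every 1 ≤ j ≤ m. Consequently, the number of reachable buyers of B̃ equals m times the number of reachable buyers of B. -/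
open scoped Classical

/-- A multi-demand report: a valuation vector and a neighbour set. -/
abbrev MReport (n m : ℕ) := (Fin m → ℝ) × Finset (Fin n)

/-- A valid valuation vector: non-negative and nonincreasing (diminishing valuations). -/
def ValidVec {m : ℕ} (w : Fin m → ℝ) : Prop := (∀ j, 0 ≤ w j) ∧ Antitone w

/-- Buyer `i` is reachable from the seller in the multi-demand profile graph. -/
def MReachable {n m : ℕ} (ts : Finset (Fin n)) (η : Fin n → MReport n m) (i : Fin n) :
    Prop :=
  ∃ j ∈ ts, Relation.ReflTransGen (fun a b => b ∈ (η a).2) j i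

/-- Normalization: unreachable buyers get the silent report `((0,…,0), ∅)`. -/
noncomputable def mnormalize {n m : ℕ} (ts : Finset (Fin n)) (η : Fin n → MReport n m) :
    Fin n → MReport n m :=
  fun i => if MReachable ts η i then η i else (fun _ => 0, (∅ : Finset (Fin n)))

/-- All reported valuation vectors are valid. -/
def MValid {n m : ℕ} (η : Fin n → MReport n m) : Prop := ∀ i, ValidVec (η i).1

/-- The multi-demand profile is normalized. -/
def MNormalized {n m : ℕ} (ts : Finset (Fin n)) (η : Fin n → MReport n m) : Prop :=
  mnormalize ts η = η

/-- Allocation rule of a multi-demand mechanism (0/1 per buyer and item index). -/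
abbrev MMechA (n m : ℕ) := Finset (Fin n) → (Fin n → MReport n m) → Fin n → Fin m → ℕ

/-- Payment rule of a multi-demand mechanism. -/
abbrev MMechP (n m : ℕ) := Finset (Fin n) → (Fin n → MReport n m) → Fin n → Fin m → ℝ

/-- The mechanism allocates 0/1 per entry and gives unreachable buyers zero allocation
and zero payments (on valid normalized profiles). -/
def MProper {n m : ℕ} (A : MMechA n m) (P : MMechP n m) : Prop :=
  ∀ ts η, MValid η → MNormalized ts η → ∀ i,
    (∀ j, A ts η i j ≤ 1) ∧
    (¬ MReachable ts η i → ∀ j, A ts η i j = 0 ∧ P ts η i j = 0)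

/-- Utility of buyer `i` with true valuation vectors `v`. -/
noncomputable def Mutil {n m : ℕ} (v : Fin n → Fin m → ℝ) (A : MMechA n m)
    (P : MMechP n m) (ts : Finset (Fin n)) (η : Fin n → MReport n m) (i : Fin n) : ℝ :=
  ∑ j, (v i j * (A ts η i j : ℝ) - P ts η i j)

/-- Social welfare with true valuation vectors `v`. -/
noncomputable def MSW {n m : ℕ} (v : Fin n → Fin m → ℝ) (A : MMechA n m)
    (ts : Finset (Fin n)) (η : Fin n → MReport n m) : ℝ :=
  ∑ i, ∑ j, v i j * (A ts η i j : ℝ)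

/-- Revenue of the seller. -/
noncomputable def MRV {n m : ℕ} (P : MMechP n m) (ts : Finset (Fin n))
    (η : Fin n → MReport n m) : ℝ :=
  ∑ i, ∑ j, P ts η i j

/-- Incentive compatibility for the multi-demand model. -/
def MIC {n m : ℕ} (A : MMechA n m) (P : MMechP n m) : Prop :=
  ∀ (ts : Finset (Fin n)) (v : Fin n → Fin m → ℝ) (t : Fin n → Finset (Fin n)),
    (∀ i, ValidVec (v i)) →
    ∀ η : Fin n → MReport n m, (∀ j, ValidVec (η j).1 ∧ (η j).2 ⊆ t j) →
    ∀ (i : Fin n) (v'' : Fin m → ℝ) (t'' : Finset (Fin n)),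
      ValidVec v'' → t'' ⊆ t i →
      Mutil v A P ts (mnormalize ts (Function.update η i (v i, t i))) i ≥
        Mutil v A P ts (mnormalize ts (Function.update η i (v'', t''))) i

/-- Individual rationality for the multi-demand model. -/
def MIR {n m : ℕ} (A : MMechA n m) (P : MMechP n m) : Prop :=
  ∀ (ts : Finset (Fin n)) (v : Fin n → Fin m → ℝ) (t : Fin n → Finset (Fin n)),
    (∀ i, ValidVec (v i)) →
    ∀ η : Fin n → MReport n m, (∀ j, ValidVec (η j).1 ∧ (η j).2 ⊆ t j) →
    ∀ i : Fin n, 0 ≤ Mutil v A P ts (mnormalize ts (Function.update η i (v i, t i))) i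

/-- Non-deficit for the multi-demand model. -/
def MND {n m : ℕ} (P : MMechP n m) : Prop :=
  ∀ ts η, MValid η → MNormalized ts η → 0 ≤ MRV P ts η

/-- Non-wastefulness for the multi-demand `m`-unit auction. -/
def MNW {n m : ℕ} (A : MMechA n m) : Prop :=
  ∀ ts η, MValid η → MNormalized ts η →
    ∑ i, ∑ j, A ts η i j =
      min m (m * (Finset.univ.filter (fun i => MReachable ts η i)).card)

/-- The seller's neighbour set in the constructed single-demand profile on
`B̃ = Fin n × Fin m`: the copies `(i, 0)` of the seller's multi-demand neighbours. -/
def liftSeller {n m : ℕ} (hm : 0 < m) (ts : Finset (Fin n)) : Finset (Fin n × Fin m) :=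
  ts.image (fun i => (i, ⟨0, hm⟩))

/-- The constructed single-demand profile on `B̃ = Fin n × Fin m` from a multi-demand
profile `η`: buyer `(i, j)` reports valuation `(η i).1 j`, and its neighbour set is
`{(i, j+1)}` if `j + 1 < m`, and `{(k, 0) : k ∈ (η i).2}` if `j` is the last index. -/
def liftProfile {n m : ℕ} (hm : 0 < m) (η : Fin n → MReport n m) :
    Fin n × Fin m → Report (Fin n × Fin m) :=
  fun b => ((η b.1).1 b.2,
    if h : (b.2 : ℕ) + 1 < m then {(b.1, ⟨(b.2 : ℕ) + 1, h⟩)}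
    else ((η b.1).2).image (fun k => (k, (⟨0, hm⟩ : Fin m))))

private lemma chainEdge {n m : ℕ} (hm : 0 < m) (η : Fin n → MReport n m)
    (i : Fin n) (k : ℕ) (hk1 : k + 1 < m) :
    ((i, ⟨k + 1, hk1⟩) : Fin n × Fin m) ∈
      (liftProfile hm η (i, ⟨k, Nat.lt_of_succ_lt hk1⟩)).2 := by
  simp only [liftProfile]
  rw [dif_pos hk1]
  exact Finset.mem_singleton_self _

private lemma chainPath {n m : ℕ} (hm : 0 < m) (η : Fin n → MReport n m)
    (i : Fin n) : ∀ (k : ℕ) (hk : k < m),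
    Relation.ReflTransGen (fun a b => b ∈ (liftProfile hm η a).2)
      (i, ⟨0, hm⟩) (i, ⟨k, hk⟩)
  | 0, _ => .refl
  | (k + 1), hk =>
      (chainPath hm η i k (Nat.lt_of_succ_lt hk)).tail (chainEdge hm η i k hk)

private lemma lastEdge {n m : ℕ} (hm : 0 < m) (η : Fin n → MReport n m)
    (a b : Fin n) (hb : b ∈ (η a).2) :
    ((b, (⟨0, hm⟩ : Fin m)) : Fin n × Fin m) ∈
      (liftProfile hm η (a, ⟨m - 1, Nat.sub_lt hm Nat.one_pos⟩)).2 := by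
  simp only [liftProfile]
  rw [dif_neg (by show ¬ (m - 1 + 1 < m); omega)]
  exact Finset.mem_image.2 ⟨b, hb, rfl⟩

private lemma proj_reach {n m : ℕ} (hm : 0 < m) (ts : Finset (Fin n))
    (η : Fin n → MReport n m) (b : Fin n × Fin m)
    (h : Reachable (liftSeller hm ts) (liftProfile hm η) b) :
    MReachable ts η b.1 := by
  obtain ⟨j, hj, hpath⟩ := h
  simp only [liftSeller, Finset.mem_image] at hj
  obtain ⟨k, hk, rfl⟩ := hj
  induction hpath with
  | refl => exact ⟨k, hk, .refl⟩
  | @tail c d _ hcd ih =>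
    simp only [liftProfile] at hcd
    by_cases hlt : (c.2 : ℕ) + 1 < m
    · rw [dif_pos hlt] at hcd
      rw [Finset.mem_singleton] at hcd
      rw [hcd]
      exact ih
    · rw [dif_neg hlt] at hcd
      obtain ⟨k', hk', rfl⟩ := Finset.mem_image.1 hcd
      obtain ⟨j', hj', p⟩ := ih
      exact ⟨j', hj', p.tail hk'⟩

private lemma m_to_s {n m : ℕ} (hm : 0 < m) (ts : Finset (Fin n))
    (η : Fin n → MReport n m) (i : Fin n) (h : MReachable ts η i) (j : Fin m) :
    Reachable (liftSeller hm ts) (liftProfile hm η) (i, j) := by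
  have h0 : Reachable (liftSeller hm ts) (liftProfile hm η) (i, ⟨0, hm⟩) := by
    obtain ⟨k, hk, hpath⟩ := h
    induction hpath with
    | refl => exact ⟨(k, ⟨0, hm⟩), Finset.mem_image.2 ⟨k, hk, rfl⟩, .refl⟩
    | @tail c d _ hcd ih =>
      obtain ⟨k', hk', p⟩ := ih
      exact ⟨k', hk',
        (p.trans (chainPath hm η c (m - 1) (Nat.sub_lt hm Nat.one_pos))).tail
          (lastEdge hm η c d hcd)⟩
  obtain ⟨k', hk', p⟩ := h0
  obtain ⟨jv, hjv⟩ := j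
  exact ⟨k', hk', p.trans (chainPath hm η i jv hjv)⟩

/-- Reachability correspondence for the multi-to-single-demand reduction: a buyer `i` is
reachable in the multi-demand profile graph iff `(i, 0)` is reachable in the constructed
single-demand graph, iff `(i, j)` is reachable for every `j`; consequently the number of
reachable buyers of `B̃ = Fin n × Fin m` is `m` times the number of reachable buyers. -/
theorem reduction_reachability (n m : ℕ) (hm : 0 < m) (ts : Finset (Fin n))
    (η : Fin n → MReport n m) (hnorm : MNormalized ts η) :
    (∀ i : Fin n,
      (MReachable ts η i ↔
        Reachable (liftSeller hm ts) (liftProfile hm η) (i, ⟨0, hm⟩)) ∧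
      (MReachable ts η i ↔
        ∀ j : Fin m, Reachable (liftSeller hm ts) (liftProfile hm η) (i, j))) ∧
    (Finset.univ.filter
        (fun b : Fin n × Fin m => Reachable (liftSeller hm ts) (liftProfile hm η) b)).card
      = m * (Finset.univ.filter (fun i : Fin n => MReachable ts η i)).card := by
  have key : ∀ b : Fin n × Fin m,
      Reachable (liftSeller hm ts) (liftProfile hm η) b ↔ MReachable ts η b.1 := by
    intro b
    exact ⟨proj_reach hm ts η b, fun h => m_to_s hm ts η b.1 h b.2⟩
  constructor
  · intro i
    constructor
    · exact ⟨fun h => m_to_s hm ts η i h _, fun h => proj_reach hm ts η _ h⟩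
    · exact ⟨fun h j => m_to_s hm ts η i h j,
        fun h => proj_reach hm ts η (i, ⟨0, hm⟩) (h ⟨0, hm⟩)⟩
  · have : (Finset.univ.filter
        (fun b : Fin n × Fin m => Reachable (liftSeller hm ts) (liftProfile hm η) b))
        = (Finset.univ.filter (fun i : Fin n => MReachable ts η i)) ×ˢ
          (Finset.univ : Finset (Fin m)) := by
      ext b
      simp [key b, Finset.mem_product]
    rw [this, Finset.card_product]
    simp [Nat.mul_comm]
end

section
/- Lemma (property transfer through the multi-to-single-demand reduction): let M̃ be any single-demand mechanism on B̃ = B × {1,…,m} and let M be the induced multi-demand mechanism. Then: (1) if M̃ is individually rational (IR), so is M; (2) if M̃ is non-deficit (ND), so is M; (3) if M̃ is non-wasteful (NW), so is M; (4) if M̃ is efficient at truthful reporting (its social welfare at every truthful single-demand profile equals the sum of the m largest true valuations among reachable buyers of B̃), then M is efficient at truthful reporting (its social welfare at every truthful multi-demand profile equals the sum of the m largest values among {v_{i,j} : 1 ≤ i ≤ n, 1 ≤ j ≤ m}). -/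
open scoped Classical

section AuxReduction

/-- Generic reachability transfer between two neighbour functions. -/
lemma greach_iff {ι : Type} {rs : Finset ι} {f g : ι → Finset ι}
    (hmono : ∀ a, g a ⊆ f a)
    (heq : ∀ a, (∃ j ∈ rs, Relation.ReflTransGen (fun x y => y ∈ f x) j a) → g a = f a)
    (i : ι) :
    (∃ j ∈ rs, Relation.ReflTransGen (fun x y => y ∈ g x) j i) ↔
      (∃ j ∈ rs, Relation.ReflTransGen (fun x y => y ∈ f x) j i) := by
  constructor
  · rintro ⟨j, hj, h⟩
    exact ⟨j, hj, Relation.ReflTransGen.mono (fun a b hb => hmono a hb) _ _ h⟩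
  · rintro ⟨j, hj, h⟩
    refine ⟨j, hj, ?_⟩
    induction h with
    | refl => exact Relation.ReflTransGen.refl
    | @tail b c hb hbc ih => exact ih.tail (by rw [heq b ⟨j, hj, hb⟩]; exact hbc)

lemma reach_normalizeS_iff {ι : Type} (rs : Finset ι) (θ : ι → Report ι) (i : ι) :
    Reachable rs (normalizeS rs θ) i ↔ Reachable rs θ i := by
  refine greach_iff (f := fun a => (θ a).2) (g := fun a => (normalizeS rs θ a).2) ?_ ?_ i
  · intro a
    simp only [normalizeS]
    split_ifs
    · exact subset_rfl
    · exact Finset.empty_subset _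
  · intro a ha
    show (normalizeS rs θ a).2 = (θ a).2
    simp only [normalizeS, if_pos (show Reachable rs θ a from ha)]

lemma mreach_mnormalize_iff {n m : ℕ} (ts : Finset (Fin n)) (η : Fin n → MReport n m)
    (i : Fin n) :
    MReachable ts (mnormalize ts η) i ↔ MReachable ts η i := by
  refine greach_iff (f := fun a => (η a).2) (g := fun a => (mnormalize ts η a).2) ?_ ?_ i
  · intro a
    simp only [mnormalize]
    split_ifs
    · exact subset_rfl
    · exact Finset.empty_subset _
  · intro a ha
    show (mnormalize ts η a).2 = (η a).2
    simp only [mnormalize, if_pos (show MReachable ts η a from ha)]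

lemma normalizeS_normalized {ι : Type} (rs : Finset ι) (θ : ι → Report ι) :
    NormalizedS rs (normalizeS rs θ) := by
  show normalizeS rs (normalizeS rs θ) = normalizeS rs θ
  funext i
  by_cases h : Reachable rs θ i
  · have h2 := (reach_normalizeS_iff rs θ i).mpr h
    show (if Reachable rs (normalizeS rs θ) i then normalizeS rs θ i else _) = _
    rw [if_pos h2]
  · have h2 : ¬ Reachable rs (normalizeS rs θ) i :=
      fun hc => h ((reach_normalizeS_iff rs θ i).mp hc)
    show (if Reachable rs (normalizeS rs θ) i then normalizeS rs θ i
        else ((0 : ℝ), (∅ : Finset ι))) = normalizeS rs θ i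
    rw [if_neg h2]
    show _ = (if Reachable rs θ i then θ i else ((0 : ℝ), (∅ : Finset ι)))
    rw [if_neg h]

lemma validS_normalizeS {ι : Type} (rs : Finset ι) (θ : ι → Report ι) (h : ValidS θ) :
    ValidS (normalizeS rs θ) := by
  intro i
  show 0 ≤ ((if Reachable rs θ i then θ i else ((0 : ℝ), (∅ : Finset ι)))).1
  split_ifs
  · exact h i
  · exact le_refl 0

lemma validS_lift {n m : ℕ} (hm : 0 < m) (η : Fin n → MReport n m) (hv : MValid η) :
    ValidS (liftProfile hm η) :=
  fun b => (hv b.1).1 b.2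

lemma lift_chain {n m : ℕ} (hm : 0 < m) (η : Fin n → MReport n m) (a : Fin n) :
    ∀ (jv : ℕ) (hj : jv < m),
      Relation.ReflTransGen (fun x y => y ∈ (liftProfile hm η x).2)
        (a, ⟨0, hm⟩) (a, ⟨jv, hj⟩) := by
  intro jv
  induction jv with
  | zero => intro hj; exact Relation.ReflTransGen.refl
  | succ k ih =>
    intro hj
    have hk : k < m := Nat.lt_of_succ_lt hj
    refine (ih hk).tail ?_
    show (a, ⟨k + 1, hj⟩) ∈ (liftProfile hm η (a, ⟨k, hk⟩)).2
    simp only [liftProfile]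
    rw [dif_pos hj]
    exact Finset.mem_singleton.mpr rfl

lemma lift_path {n m : ℕ} (hm : 0 < m) (η : Fin n → MReport n m) {k i : Fin n}
    (h : Relation.ReflTransGen (fun a b => b ∈ (η a).2) k i) :
    Relation.ReflTransGen (fun x y => y ∈ (liftProfile hm η x).2)
      (k, (⟨0, hm⟩ : Fin m)) (i, (⟨0, hm⟩ : Fin m)) := by
  induction h with
  | refl => exact Relation.ReflTransGen.refl
  | @tail b c hb hbc ih =>
    refine ih.trans ?_
    refine (lift_chain hm η b (m - 1) (Nat.sub_lt hm one_pos)).trans ?_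
    refine Relation.ReflTransGen.single ?_
    show (c, (⟨0, hm⟩ : Fin m)) ∈ (liftProfile hm η (b, ⟨m - 1, Nat.sub_lt hm one_pos⟩)).2
    simp only [liftProfile]
    rw [dif_neg (by show ¬ (m - 1 + 1 < m); omega)]
    exact Finset.mem_image.mpr ⟨c, hbc, rfl⟩

lemma proj_path {n m : ℕ} (hm : 0 < m) (η : Fin n → MReport n m)
    {x y : Fin n × Fin m}
    (h : Relation.ReflTransGen (fun a b => b ∈ (liftProfile hm η a).2) x y) :
    Relation.ReflTransGen (fun a b => b ∈ (η a).2) x.1 y.1 := by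
  induction h with
  | refl => exact Relation.ReflTransGen.refl
  | @tail b c _ hbc ih =>
    simp only [liftProfile] at hbc
    split_ifs at hbc with h1
    · rw [Finset.mem_singleton] at hbc
      rw [hbc]
      exact ih
    · obtain ⟨kk, hkk, rfl⟩ := Finset.mem_image.mp hbc
      exact ih.tail hkk

lemma lift_reach {n m : ℕ} (hm : 0 < m) (ts : Finset (Fin n)) (η : Fin n → MReport n m)
    (i : Fin n) (j : Fin m) :
    Reachable (liftSeller hm ts) (liftProfile hm η) (i, j) ↔ MReachable ts η i := by
  constructor
  · rintro ⟨p, hp, hpath⟩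
    obtain ⟨k, hk, rfl⟩ := Finset.mem_image.mp hp
    exact ⟨k, hk, proj_path hm η hpath⟩
  · rintro ⟨k, hk, hpath⟩
    refine ⟨(k, ⟨0, hm⟩), Finset.mem_image.mpr ⟨k, hk, rfl⟩, ?_⟩
    exact (lift_path hm η hpath).trans (lift_chain hm η i j.1 j.2)

end AuxReduction

/-- Property transfer through the multi-to-single-demand reduction: if the single-demand
mechanism `(A, P)` on `B̃ = Fin n × Fin m` is (1) IR, (2) ND, (3) NW, or (4) efficient at
truthful reporting (its social welfare at every truthful single-demand profile equals the
sum of the `m` largest true valuations among reachable buyers of `B̃`), then the induced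
multi-demand mechanism `(Aind, Pind)` is respectively IR, ND, NW, or efficient at
truthful reporting (its social welfare at every truthful multi-demand profile with all
buyers reachable equals the sum of the `m` largest values among all `n·m` true
valuations). -/
theorem reduction_property_transfer (n m : ℕ) (hm : 0 < m)
    (A : MechA (Fin n × Fin m)) (P : MechP (Fin n × Fin m))
    (hAP : ProperS A P) :
    let Aind : MMechA n m := fun ts η a b =>
      A (liftSeller hm ts) (normalizeS (liftSeller hm ts) (liftProfile hm η)) (a, b)
    let Pind : MMechP n m := fun ts η a b =>
      P (liftSeller hm ts) (normalizeS (liftSeller hm ts) (liftProfile hm η)) (a, b)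
    -- (1) individual rationality transfers
    (IRS A P → MIR Aind Pind) ∧
    -- (2) non-deficit transfers
    (NDS P → MND Pind) ∧
    -- (3) non-wastefulness transfers
    (NWS m A → MNW Aind) ∧
    -- (4) efficiency at truthful reporting transfers
    ((∀ (rs : Finset (Fin n × Fin m)) (v : Fin n × Fin m → ℝ)
        (r : Fin n × Fin m → Finset (Fin n × Fin m)), (∀ b, 0 ≤ v b) →
        SWS v A rs (normalizeS rs (fun b => (v b, r b))) =
          topSum m ((Finset.univ.filter
            (fun b => Reachable rs (fun c => (v c, r c)) b)).val.map v)) →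
      (∀ (ts : Finset (Fin n)) (v : Fin n → Fin m → ℝ) (t : Fin n → Finset (Fin n)),
        (∀ i, ValidVec (v i)) →
        (∀ i, MReachable ts (fun k => (v k, t k)) i) →
        MSW v Aind ts (fun k => (v k, t k)) =
          topSum m (Finset.univ.val.bind
            (fun i : Fin n => Finset.univ.val.map (v i))))) := by
  intro Aind Pind
  refine ⟨?_, ?_, ?_, ?_⟩
  -- (1) IR
  · intro hIR ts v t hv η hη i
    unfold Aind Pind
    set η' := Function.update η i (v i, t i) with hη'def
    set η'' := mnormalize ts η' with hη''def
    set rs := liftSeller hm ts with hrsdef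
    set θ0 := liftProfile hm η'' with hθ0def
    have hη'valid : ∀ a, ValidVec (η' a).1 ∧ (η' a).2 ⊆ t a := by
      intro a
      rcases eq_or_ne a i with rfl | hne
      · rw [hη'def, Function.update_self]
        exact ⟨hv a, subset_rfl⟩
      · rw [hη'def, Function.update_of_ne hne]
        exact hη a
    have hMval : MValid η'' := by
      intro a
      show ValidVec ((if MReachable ts η' a then η' a else (fun _ => 0, ∅)).1)
      split_ifs
      · exact (hη'valid a).1
      · exact ⟨fun _ => le_refl 0, fun _ _ _ => le_refl 0⟩
    have hvalθ : ValidS (normalizeS rs θ0) :=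
      validS_normalizeS rs θ0 (validS_lift hm η'' hMval)
    have hnθ : NormalizedS rs (normalizeS rs θ0) := normalizeS_normalized rs θ0
    by_cases hr : MReachable ts η' i
    · -- i is reachable: apply IR of the single-demand mechanism at each copy (i, j)
      have hri : MReachable ts η'' i := (mreach_mnormalize_iff ts η' i).mpr hr
      have hηi : η'' i = (v i, t i) := by
        show (if MReachable ts η' i then η' i else (fun _ => 0, ∅)) = _
        rw [if_pos hr, hη'def, Function.update_self]
      have hsub : ∀ a : Fin n, (η'' a).2 ⊆ t a := by
        intro a
        show (if MReachable ts η' a then η' a else (fun _ => 0, ∅)).2 ⊆ t a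
        split_ifs
        · exact (hη'valid a).2
        · exact Finset.empty_subset _
      set sv : Fin n × Fin m → ℝ := fun b => v b.1 b.2 with hsvdef
      set sr : Fin n × Fin m → Finset (Fin n × Fin m) := fun b =>
        if h : (b.2 : ℕ) + 1 < m then {(b.1, ⟨(b.2 : ℕ) + 1, h⟩)}
        else (t b.1).image (fun k => (k, (⟨0, hm⟩ : Fin m))) with hsrdef
      have hsvpos : ∀ b, 0 ≤ sv b := fun b => (hv b.1).1 b.2
      have hθ0c : ∀ b, 0 ≤ (θ0 b).1 ∧ (θ0 b).2 ⊆ sr b := by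
        intro b
        refine ⟨(hMval b.1).1 b.2, ?_⟩
        show (liftProfile hm η'' b).2 ⊆ sr b
        rw [hsrdef]
        simp only [liftProfile]
        split_ifs with h
        · exact subset_rfl
        · exact Finset.image_subset_image (hsub b.1)
      have hupd : ∀ j : Fin m,
          Function.update θ0 (i, j) (sv (i, j), sr (i, j)) = θ0 := by
        intro j
        have hθij : θ0 (i, j) = (sv (i, j), sr (i, j)) := by
          show liftProfile hm η'' (i, j) = _
          simp only [liftProfile, hηi, hsvdef, hsrdef]
        rw [← hθij, Function.update_eq_self]
      have hkey : ∀ j : Fin m,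
          0 ≤ v i j * (A rs (normalizeS rs θ0) (i, j) : ℝ) - P rs (normalizeS rs θ0) (i, j) := by
        intro j
        have h1 := hIR rs sv sr hsvpos θ0 hθ0c (i, j)
        rw [hupd j] at h1
        exact h1
      unfold Mutil
      exact Finset.sum_nonneg fun j _ => hkey j
    · -- i unreachable: zero allocation and payment
      have hre : ∀ j : Fin m, ¬ Reachable rs (normalizeS rs θ0) (i, j) := by
        intro j hc
        have h2 : Reachable rs θ0 (i, j) := (reach_normalizeS_iff rs θ0 (i, j)).mp hc
        have h3 : MReachable ts η'' i := (lift_reach hm ts η'' i j).mp h2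
        exact hr ((mreach_mnormalize_iff ts η' i).mp h3)
      have hzero := fun j : Fin m => (hAP rs (normalizeS rs θ0) hvalθ hnθ (i, j)).2 (hre j)
      unfold Mutil
      refine Finset.sum_nonneg fun j _ => ?_
      show 0 ≤ v i j * ((A rs (normalizeS rs θ0) (i, j) : ℕ) : ℝ) -
        P rs (normalizeS rs θ0) (i, j)
      rw [(hzero j).1, (hzero j).2]
      simp
  -- (2) ND
  · intro hND ts η hval _hnorm
    unfold Pind
    have h1 := hND (liftSeller hm ts) (normalizeS (liftSeller hm ts) (liftProfile hm η))
      (validS_normalizeS _ _ (validS_lift hm η hval)) (normalizeS_normalized _ _)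
    unfold MRV
    unfold RVS at h1
    rw [Fintype.sum_prod_type] at h1
    exact h1
  -- (3) NW
  · intro hNW ts η hval _hnorm
    unfold Aind
    set rs := liftSeller hm ts with hrsdef
    set θ0 := liftProfile hm η with hθ0def
    set θ := normalizeS rs θ0 with hθdef
    have h1 := hNW rs θ (validS_normalizeS _ _ (validS_lift hm η hval))
      (normalizeS_normalized _ _)
    have hiff : ∀ b : Fin n × Fin m, Reachable rs θ b ↔ MReachable ts η b.1 := fun b =>
      (reach_normalizeS_iff rs θ0 b).trans (lift_reach hm ts η b.1 b.2)
    have hcard : nReach rs θ = (Finset.univ.filter (fun i => MReachable ts η i)).card * m := by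
      unfold nReach
      have hfe : Finset.univ.filter (fun b : Fin n × Fin m => Reachable rs θ b) =
          (Finset.univ.filter (fun i => MReachable ts η i)) ×ˢ (Finset.univ : Finset (Fin m)) := by
        ext b
        simp [hiff b, Finset.mem_product]
      rw [hfe, Finset.card_product, Finset.card_univ, Fintype.card_fin]
    rw [Fintype.sum_prod_type] at h1
    rw [h1, hcard, Nat.mul_comm]
  -- (4) efficiency
  · intro hEff ts v t hv hreach
    unfold Aind
    set rs := liftSeller hm ts with hrsdef
    set sv : Fin n × Fin m → ℝ := fun b => v b.1 b.2 with hsvdef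
    set sr : Fin n × Fin m → Finset (Fin n × Fin m) := fun b =>
      if h : (b.2 : ℕ) + 1 < m then {(b.1, ⟨(b.2 : ℕ) + 1, h⟩)}
      else (t b.1).image (fun k => (k, (⟨0, hm⟩ : Fin m))) with hsrdef
    have hprofile : (fun b => (sv b, sr b)) = liftProfile hm (fun k => (v k, t k)) := rfl
    have h1 := hEff rs sv sr (fun b => (hv b.1).1 b.2)
    rw [hprofile] at h1
    have hall : ∀ b : Fin n × Fin m,
        Reachable rs (liftProfile hm (fun k => (v k, t k))) b :=
      fun b => (lift_reach hm ts (fun k => (v k, t k)) b.1 b.2).mpr (hreach b.1)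
    have hfu : (Finset.univ.filter
        (fun b => Reachable rs (liftProfile hm (fun k => (v k, t k))) b)) =
        (Finset.univ : Finset (Fin n × Fin m)) :=
      Finset.filter_true_of_mem fun b _ => hall b
    rw [hfu] at h1
    have hms : ((Finset.univ : Finset (Fin n × Fin m)).val.map sv : Multiset ℝ) =
        Finset.univ.val.bind (fun i : Fin n => Finset.univ.val.map (v i)) := by
      rw [← Finset.univ_product_univ, Finset.product_val]
      show (((Finset.univ : Finset (Fin n)).val.bind
          fun a => (Finset.univ : Finset (Fin m)).val.map (Prod.mk a)).map sv) = _
      rw [Multiset.map_bind]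
      congr 1
      funext a
      rw [Multiset.map_map]
      congr 1
    rw [hms] at h1
    unfold SWS at h1
    rw [Fintype.sum_prod_type] at h1
    unfold MSW
    exact h1
end
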